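/- arXiv:1409.3659 — 5 statements merged into one kernel-verified Lean document; each statement's English description precedes it below -/
import Mathlib

section
/- Let k be a positive integer and let G=(V,E) be a finite simple graph with minimum degree at least 2k+1. Then G has an edge-colouring f:E→{1,2} such that every vertex is incident with at least k edges of colour 1 and at least k edges of colour 2. -/
open Finset SimpleGraph

section Aux

variable {V : Type*} [DecidableEq V]


def chi (b : Bool) : ℤ := if b then 1 else -1

def imb (E : Finset (Sym2 V)) (g : Sym2 V → Bool) (w : V) : ℤ :=
  ((E.filter (fun e => w ∈ e ∧ g e = true)).card : ℤ) -
  ((E.filter (fun e => w ∈ e ∧ g e = false)).card : ℤ)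

lemma chi_not (b : Bool) : chi (!b) = - chi b := by cases b <;> rfl

lemma filter_eq_of_agree {E : Finset (Sym2 V)} {g g' : Sym2 V → Bool} {w : V} (b : Bool)
    (h : ∀ e ∈ E, w ∈ e → g e = g' e) :
    E.filter (fun e => w ∈ e ∧ g e = b) = E.filter (fun e => w ∈ e ∧ g' e = b) :=
  Finset.filter_congr (fun e he => by
    by_cases hw : w ∈ e
    · simp [hw, h e he hw]
    · simp [hw])

lemma imb_congr {E : Finset (Sym2 V)} {g g' : Sym2 V → Bool} {w : V}
    (h : ∀ e ∈ E, w ∈ e → g e = g' e) : imb E g w = imb E g' w := by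
  unfold imb
  rw [filter_eq_of_agree true h, filter_eq_of_agree false h]

lemma imb_union {A B : Finset (Sym2 V)} (hd : Disjoint A B) (g : Sym2 V → Bool) (w : V) :
    imb (A ∪ B) g w = imb A g w + imb B g w := by
  unfold imb
  rw [Finset.filter_union, Finset.filter_union,
    Finset.card_union_of_disjoint (Finset.disjoint_filter_filter hd),
    Finset.card_union_of_disjoint (Finset.disjoint_filter_filter hd)]
  push_cast; ring

lemma imb_singleton (e : Sym2 V) (g : Sym2 V → Bool) (w : V) :
    imb {e} g w = if w ∈ e then chi (g e) else 0 := by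
  unfold imb chi
  by_cases hw : w ∈ e <;> cases hge : g e <;>
    simp [Finset.filter_singleton, hw, hge]

lemma imb_flip {E : Finset (Sym2 V)} {g g' : Sym2 V → Bool} {w : V}
    (h : ∀ e ∈ E, w ∈ e → g' e = !(g e)) : imb E g' w = - imb E g w := by
  unfold imb
  have h1 : E.filter (fun e => w ∈ e ∧ g' e = true) = E.filter (fun e => w ∈ e ∧ g e = false) :=
    Finset.filter_congr (fun e he => by
      by_cases hw : w ∈ e
      · simp [hw, h e he hw]
      · simp [hw])
  have h2 : E.filter (fun e => w ∈ e ∧ g' e = false) = E.filter (fun e => w ∈ e ∧ g e = true) :=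
    Finset.filter_congr (fun e he => by
      by_cases hw : w ∈ e
      · simp [hw, h e he hw]
      · simp [hw])
  rw [h1, h2]; ring

lemma path_imb (H : SimpleGraph V) {a b : V} (p : H.Walk a b) :
    ∀ (_ : p.IsPath) (_ : a ≠ b) (c : Bool),
    ∃ g : Sym2 V → Bool,
      ∀ w, imb p.edges.toFinset g w =
        (if w = a then chi c else 0) +
        (if w = b then chi (xor (decide (Even p.length)) c) else 0) := by
  induction p with
  | nil => exact fun _ hab _ => absurd rfl hab
  | @cons u a' b h q ih =>
    intro hp hab c
    have hq : q.IsPath := hp.of_cons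
    have hus : u ∉ q.support := ((Walk.cons_isPath_iff h q).mp hp).2
    have hne : u ≠ a' := h.ne
    have hub : u ≠ b := fun h' => hus (h' ▸ q.end_mem_support)
    by_cases hnil : q.length = 0
    · have hab' : a' = b := Walk.eq_of_length_eq_zero hnil
      subst hab'
      have hqe : q.edges = [] := List.eq_nil_of_length_eq_zero (by rw [Walk.length_edges]; exact hnil)
      refine ⟨fun _ => c, fun w => ?_⟩
      have hlen : (Walk.cons h q).length = 1 := by simp [Walk.length_cons, hnil]
      rw [Walk.edges_cons, hqe]
      simp only [List.toFinset_cons, List.toFinset_nil, insert_empty_eq]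
      rw [imb_singleton]
      rw [hlen]
      norm_num
      by_cases hwu : w = u <;> by_cases hwa : w = a' <;>
        simp_all [Sym2.mem_iff, chi]
    · have hab2 : a' ≠ b := by
        intro h'
        subst h'
        exact hnil (by simpa [Walk.isPath_iff_eq_nil] using hq)
      obtain ⟨gq, hgq⟩ := ih hq hab2 (!c)
      have henotin : s(u, a') ∉ q.edges := by
        have := hp.isTrail.edges_nodup
        rw [Walk.edges_cons] at this
        exact (List.nodup_cons.mp this).1
      refine ⟨fun x => if x = s(u, a') then c else gq x, fun w => ?_⟩
      have hsplit : (Walk.cons h q).edges.toFinset = {s(u, a')} ∪ q.edges.toFinset := by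
        rw [Walk.edges_cons, List.toFinset_cons, Finset.insert_eq]
      have hdisj : Disjoint ({s(u, a')} : Finset (Sym2 V)) q.edges.toFinset := by
        simp [Finset.disjoint_singleton_left, henotin]
      rw [hsplit, imb_union hdisj, imb_singleton]
      have hcongr : imb q.edges.toFinset (fun x => if x = s(u, a') then c else gq x) w
          = imb q.edges.toFinset gq w :=
        imb_congr (fun e he _ => by
          rw [if_neg]
          intro h'
          exact henotin (h' ▸ List.mem_toFinset.mp he))
      rw [hcongr, hgq w]
      simp only [if_pos rfl]
      have hpar : (decide (Even (Walk.cons h q).length) : Bool)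
          = !(decide (Even q.length)) := by
        rw [Walk.length_cons]
        rcases Nat.even_or_odd q.length with he | ho
        · simp [Nat.even_add_one, he, Nat.not_even_iff_odd.mpr, (Nat.odd_add_one ).mpr]
        · simp [Nat.even_add_one, Nat.not_even_iff_odd.mpr ho, Nat.not_even_iff_odd.mpr ho]
      rw [hpar]
      have hxor : ∀ d : Bool, xor (!d) c = xor d (!c) := by
        intro d; cases d <;> cases c <;> rfl
      by_cases hwu : w = u <;> by_cases hwa : w = a' <;> by_cases hwb : w = b
      · exact absurd (hwa ▸ hwb : a' = b) hab2  -- w=u=a'=b impossible anyway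
      · exact absurd (hwu ▸ hwa : u = a') hne
      · exact absurd (hwu ▸ hwb : u = b) hub
      · -- w = u only
        subst hwu
        simp [Sym2.mem_iff, hwa, hwb, Ne.symm hne, hub]
      · exact absurd (hwa ▸ hwb : a' = b) hab2
      · -- w = a' only
        subst hwa
        rw [hxor]
        simp [Sym2.mem_iff, hwu, hwb, chi_not]
      · -- w = b only
        subst hwb
        rw [hxor]
        simp [Sym2.mem_iff, hwu, hwa, Ne.symm hub]
      · -- none
        simp [Sym2.mem_iff, hwu, hwa, hwb]

lemma exists_balanced : ∀ (n : ℕ) (E : Finset (Sym2 V)), E.card ≤ n →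
    (∀ e ∈ E, ¬ e.IsDiag) →
    ∃ g : Sym2 V → Bool, ∀ w, |imb E g w| ≤ 2 := by
  intro n
  induction n with
  | zero =>
    intro E hcard _
    rw [Nat.le_zero, Finset.card_eq_zero] at hcard
    subst hcard
    exact ⟨fun _ => true, fun w => by simp [imb]⟩
  | succ n ihn =>
    intro E hcard hE
    classical
    rcases E.eq_empty_or_nonempty with rfl | ⟨e, he⟩
    · exact ⟨fun _ => true, fun w => by simp [imb]⟩
    revert he
    induction e using Sym2.ind with
    | _ u v =>
    intro he
    have huv : u ≠ v := by
      have := hE _ he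
      rwa [Sym2.isDiag_iff_proj_eq] at this
    set E' := E.erase s(u, v) with hE'def
    have hE'sub : E' ⊆ E := Finset.erase_subset _ _
    have hE'diag : ∀ x ∈ E', ¬ x.IsDiag := fun x hx => hE x (hE'sub hx)
    have hcard' : E'.card ≤ n := by
      have h1 : E'.card = E.card - 1 := Finset.card_erase_of_mem he
      have h2 : 1 ≤ E.card := Finset.card_pos.mpr ⟨_, he⟩
      omega
    set G' := SimpleGraph.fromEdgeSet (↑E' : Set (Sym2 V)) with hG'def
    have hadj : ∀ x y : V, s(x, y) ∈ E' → x ≠ y → G'.Adj x y := by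
      intro x y hxy hne
      rw [hG'def, SimpleGraph.fromEdgeSet_adj]
      exact ⟨hxy, hne⟩
    by_cases hreach : G'.Reachable v u
    · -- cycle case
      obtain ⟨w0⟩ := hreach
      set p : G'.Walk v u := (w0.toPath : G'.Path v u).1 with hpdef
      have hp : p.IsPath := (w0.toPath : G'.Path v u).2
      have hpe : ∀ x ∈ p.edges, x ∈ E' := by
        intro x hx
        have h1 := p.edges_subset_edgeSet hx
        rw [hG'def, SimpleGraph.edgeSet_fromEdgeSet] at h1
        exact h1.1
      have henp : s(u, v) ∉ p.edges := fun hx =>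
        Finset.notMem_erase _ _ (hpe _ hx)
      set C : Finset (Sym2 V) := insert s(u, v) p.edges.toFinset with hCdef
      have hCE : C ⊆ E := by
        intro x hx
        rcases Finset.mem_insert.mp hx with rfl | hx'
        · exact he
        · exact hE'sub (hpe _ (List.mem_toFinset.mp hx'))
      set E2 := E \ C with hE2def
      have hcard2 : E2.card ≤ n := by
        have h1 : E2 ⊆ E' := by
          intro x hx
          rcases Finset.mem_sdiff.mp hx with ⟨hx1, hx2⟩
          exact Finset.mem_erase.mpr ⟨fun h' => hx2 (h' ▸ Finset.mem_insert_self _ _), hx1⟩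
        exact le_trans (Finset.card_le_card h1) hcard'
      obtain ⟨g2, hg2⟩ := ihn E2 hcard2 (fun x hx => hE x (Finset.mem_sdiff.mp hx).1)
      set su := imb E2 g2 u with hsu
      set c0 : Bool := decide (0 ≤ su) with hc0
      obtain ⟨gp, hgp⟩ := path_imb G' p hp (Ne.symm huv) c0
      set ce := !c0 with hce
      refine ⟨fun x => if x = s(u, v) then ce else if x ∈ p.edges then gp x else g2 x,
        fun w => ?_⟩
      have hEeq : E = E2 ∪ C := (Finset.sdiff_union_of_subset hCE).symm
      have hd1 : Disjoint E2 C := Finset.sdiff_disjoint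
      have hd2 : Disjoint ({s(u, v)} : Finset (Sym2 V)) p.edges.toFinset := by
        simp [Finset.disjoint_singleton_left, henp]
      have hCsplit : C = {s(u, v)} ∪ p.edges.toFinset := by
        rw [hCdef, Finset.insert_eq]
      rw [hEeq, imb_union hd1, hCsplit, imb_union hd2, imb_singleton]
      have hg2congr : imb E2 (fun x => if x = s(u, v) then ce else if x ∈ p.edges then gp x else g2 x) w
          = imb E2 g2 w := imb_congr (fun x hx _ => by
        rcases Finset.mem_sdiff.mp hx with ⟨_, hx2⟩
        rw [if_neg (fun h' => hx2 (by rw [h']; exact Finset.mem_insert_self _ _)),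
          if_neg (fun h' => hx2 (Finset.mem_insert.mpr (Or.inr (List.mem_toFinset.mpr h'))))])
      have hgpcongr : imb p.edges.toFinset (fun x => if x = s(u, v) then ce else if x ∈ p.edges then gp x else g2 x) w
          = imb p.edges.toFinset gp w := imb_congr (fun x hx _ => by
        have hx' := List.mem_toFinset.mp hx
        rw [if_neg (fun h' => henp (by rw [← h']; exact hx')), if_pos hx'])
      rw [hg2congr, hgpcongr, hgp w]
      simp only [eq_self_iff_true, if_true]
      have hb2 := hg2 w
      have hb2u := hg2 u
      rw [abs_le] at hb2 hb2u ⊢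
      rw [← hsu] at hb2u
      by_cases hwu : w = u <;> by_cases hwv : w = v
      · exact absurd (hwu.symm.trans hwv) huv
      · -- w = u
        rw [hwu]
        rw [if_pos (Sym2.mem_mk_left u v), if_neg huv, if_pos rfl]
        rw [← hsu]
        rcases Bool.dichotomy (decide (Even p.length)) with hD | hD <;> rw [hD] <;>
          by_cases hsu0 : 0 ≤ su
        · have hc0v : c0 = true := by rw [hc0]; simp [hsu0]
          rw [hce, hc0v]; norm_num [chi]; omega
        · have hc0v : c0 = false := by rw [hc0]; simp [hsu0]
          rw [hce, hc0v]; norm_num [chi]; omega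
        · have hc0v : c0 = true := by rw [hc0]; simp [hsu0]
          rw [hce, hc0v]; norm_num [chi]; omega
        · have hc0v : c0 = false := by rw [hc0]; simp [hsu0]
          rw [hce, hc0v]; norm_num [chi]; omega
      · -- w = v
        rw [hwv] at hb2 ⊢
        rw [if_pos (Sym2.mem_mk_right u v), if_pos rfl, if_neg (Ne.symm huv)]
        rcases Bool.dichotomy c0 with hcv | hcv <;> rw [hce, hcv] <;> norm_num [chi] <;> omega
      · -- neither
        have hwm : w ∉ s(u, v) := by
          rw [Sym2.mem_iff]
          push_neg
          exact ⟨hwu, hwv⟩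
        rw [if_neg hwm, if_neg hwv, if_neg hwu]
        omega
    · -- bridge case
      obtain ⟨g1, hg1⟩ := ihn E' hcard' hE'diag
      have key : ∃ g2 : Sym2 V → Bool, (∀ w, |imb E' g2 w| ≤ 2) ∧
          ((0 ≤ imb E' g2 u → 0 ≤ imb E' g2 v) ∧ (imb E' g2 u < 0 → imb E' g2 v ≤ 0)) := by
        by_cases halign : (0 ≤ imb E' g1 u ↔ 0 ≤ imb E' g1 v)
        · refine ⟨g1, hg1, fun h => halign.mp h, fun h => ?_⟩
          have := fun h' => (not_le.mpr h) (halign.mpr h')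
          omega
        · set g2 : Sym2 V → Bool :=
            fun x => if ∃ z, z ∈ x ∧ G'.Reachable v z then !(g1 x) else g1 x with hg2def
          have hSflip : ∀ w, G'.Reachable v w → imb E' g2 w = - imb E' g1 w := by
            intro w hw
            exact imb_flip (fun x _ hwx => if_pos ⟨w, hwx, hw⟩)
          have hSfix : ∀ w, ¬ G'.Reachable v w → imb E' g2 w = imb E' g1 w := by
            intro w hw
            refine (imb_congr ?_).symm
            intro x hx hwx
            simp only [hg2def]
            rw [if_neg]
            rintro ⟨z, hzx, hz⟩
            apply hw
            by_cases hzw : z = w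
            · exact hzw ▸ hz
            · have hxe : x = s(z, w) := (Sym2.mem_and_mem_iff hzw).mp ⟨hzx, hwx⟩
              exact hz.trans (hadj z w (hxe ▸ hx) hzw).reachable
          have hu2 : imb E' g2 u = imb E' g1 u := hSfix u hreach
          have hv2 : imb E' g2 v = - imb E' g1 v := hSflip v (Reachable.refl v)
          refine ⟨g2, ?_, ?_, ?_⟩
          · intro w
            by_cases hw : G'.Reachable v w
            · rw [hSflip w hw, abs_neg]; exact hg1 w
            · rw [hSfix w hw]; exact hg1 w
          · intro h
            rw [hu2] at h
            rw [hv2]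
            rcases le_or_gt 0 (imb E' g1 v) with h' | h'
            · exact absurd (iff_of_true h h') halign
            · omega
          · intro h
            rw [hu2] at h
            rw [hv2]
            rcases le_or_gt 0 (imb E' g1 v) with h' | h'
            · omega
            · exact absurd (iff_of_false (not_le.mpr h) (not_le.mpr h')) halign
      obtain ⟨g2, hgb, hgs1, hgs2⟩ := key
      set ce : Bool := !decide (0 ≤ imb E' g2 u) with hcedef
      refine ⟨fun x => if x = s(u, v) then ce else g2 x, fun w => ?_⟩
      have hEeq : E = {s(u, v)} ∪ E' := by
        rw [← Finset.insert_eq]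
        exact (Finset.insert_erase he).symm
      have hd : Disjoint ({s(u, v)} : Finset (Sym2 V)) E' := by
        rw [Finset.disjoint_singleton_left]
        exact Finset.notMem_erase _ _
      rw [hEeq, imb_union hd, imb_singleton, if_pos rfl]
      have hcong : imb E' (fun x => if x = s(u, v) then ce else g2 x) w = imb E' g2 w :=
        imb_congr (fun x hx _ => if_neg (fun h' => Finset.notMem_erase s(u, v) E
          (by rw [hE'def] at hx; rwa [h'] at hx)))
      rw [hcong]
      have hbw := hgb w
      have hbu := hgb u
      have hbv := hgb v
      rw [abs_le] at hbw hbu hbv ⊢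
      by_cases hwu : w = u <;> by_cases hwv : w = v
      · exact absurd (hwu.symm.trans hwv) huv
      · rw [hwu]
        rw [if_pos (Sym2.mem_mk_left u v)]
        by_cases h0 : 0 ≤ imb E' g2 u
        · have : ce = false := by rw [hcedef]; simp [h0]
          rw [this]; norm_num [chi]; omega
        · have : ce = true := by rw [hcedef]; simp [h0]
          rw [this]; norm_num [chi]; omega
      · rw [hwv]
        rw [if_pos (Sym2.mem_mk_right u v)]
        by_cases h0 : 0 ≤ imb E' g2 u
        · have hv0 : 0 ≤ imb E' g2 v := hgs1 h0
          have : ce = false := by rw [hcedef]; simp [h0]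
          rw [this]; norm_num [chi]; omega
        · have hv0 : imb E' g2 v ≤ 0 := hgs2 (not_le.mp h0)
          have : ce = true := by rw [hcedef]; simp [h0]
          rw [this]; norm_num [chi]; omega
      · have hwm : w ∉ s(u, v) := by
          rw [Sym2.mem_iff]; push_neg; exact ⟨hwu, hwv⟩
        rw [if_neg hwm]
        omega

end Aux

/-- A graph with minimum degree at least `2k+1` has an edge-colouring with two colours
such that every vertex is incident with at least `k` edges of each colour. -/
theorem statement2 (k : ℕ) (hk : 0 < k) {V : Type*} [Fintype V] [DecidableEq V]
    (G : SimpleGraph V) [DecidableRel G.Adj]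
    (hdeg : ∀ v : V, 2 * k + 1 ≤ G.degree v) :
    ∃ f : Sym2 V → ℕ,
      (∀ e ∈ G.edgeFinset, f e = 1 ∨ f e = 2) ∧
      (∀ v : V, k ≤ ((G.incidenceFinset v).filter (fun e => f e = 1)).card) ∧
      (∀ v : V, k ≤ ((G.incidenceFinset v).filter (fun e => f e = 2)).card) := by
  classical
  obtain ⟨g, hg⟩ := exists_balanced G.edgeFinset.card G.edgeFinset le_rfl
    (fun e he => G.not_isDiag_of_mem_edgeSet (mem_edgeFinset.mp he))
  refine ⟨fun e => if g e then 1 else 2, ?_, ?_, ?_⟩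
  · intro e _
    by_cases h : g e <;> simp [h]
  all_goals
    intro v
    beta_reduce
    have hfilter1 : (G.incidenceFinset v).filter (fun e => (if g e then 1 else 2) = 1)
        = G.edgeFinset.filter (fun e => v ∈ e ∧ g e = true) := by
      rw [G.incidenceFinset_eq_filter v, Finset.filter_filter]
      refine Finset.filter_congr (fun e _ => ?_)
      by_cases h : g e <;> simp [h]
    have hfilter2 : (G.incidenceFinset v).filter (fun e => (if g e then 1 else 2) = 2)
        = G.edgeFinset.filter (fun e => v ∈ e ∧ g e = false) := by
      rw [G.incidenceFinset_eq_filter v, Finset.filter_filter]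
      refine Finset.filter_congr (fun e _ => ?_)
      by_cases h : g e <;> simp [h]
    have hsum : (G.edgeFinset.filter (fun e => v ∈ e ∧ g e = true)).card
        + (G.edgeFinset.filter (fun e => v ∈ e ∧ g e = false)).card = G.degree v := by
      have h1 : G.edgeFinset.filter (fun e => v ∈ e ∧ g e = true)
          = (G.edgeFinset.filter (fun e => v ∈ e)).filter (fun e => g e = true) := by
        rw [Finset.filter_filter]
      have h2 : G.edgeFinset.filter (fun e => v ∈ e ∧ g e = false)
          = (G.edgeFinset.filter (fun e => v ∈ e)).filter (fun e => ¬ (g e = true)) := by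
        rw [Finset.filter_filter]
        exact Finset.filter_congr (fun e _ => by by_cases h : g e <;> simp [h])
      rw [h1, h2, Finset.card_filter_add_card_filter_not,
        ← G.incidenceFinset_eq_filter v, G.card_incidenceFinset_eq_degree]
    have himb := hg v
    rw [abs_le] at himb
    have hd := hdeg v
    unfold imb at himb
    rw [← hfilter1, ← hfilter2] at himb
    rw [← hfilter1, ← hfilter2] at hsum
    omega
end

section
/- Let n, r₁ and r₂ be positive integers, and for i=1,2 set pᵢ = √rᵢ/(√r₁+√r₂). Suppose r is a positive integer with r ≤ n(n−1)/2 such that r·pᵢ² − √(r·pᵢ² + 2rn·pᵢ³ − r(2n+1)·pᵢ⁴) ≥ rᵢ holds for i=1 and i=2. Then every finite simple graph G on n vertices with exactly r edges admits a partition of its vertex set V(G)=V₁∪V₂ into two disjoint parts such that at least r₁ edges of G have both endpoints in V₁ and at least r₂ edges of G have both endpoints in V₂. -/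
open Finset SimpleGraph

/-- The probability `pᵢ = √rᵢ / (√r₁ + √r₂)` used in the random bipartition. -/
noncomputable def pratio (r₁ r₂ i : ℕ) : ℝ :=
  Real.sqrt i / (Real.sqrt r₁ + Real.sqrt r₂)

section Aux

variable {V : Type} [Fintype V] [DecidableEq V]

/-- The product measure on subsets of `V` where each vertex is included with probability `p`. -/
noncomputable def mu (p : ℝ) (A : Finset V) : ℝ := p ^ A.card * (1 - p) ^ Aᶜ.card

lemma mu_nonneg {p : ℝ} (h0 : 0 ≤ p) (h1 : p ≤ 1) (A : Finset V) : 0 ≤ mu p A := by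
  have : (0:ℝ) ≤ 1 - p := by linarith
  exact mul_nonneg (pow_nonneg h0 _) (pow_nonneg this _)

lemma sum_mu (p : ℝ) : ∑ A : Finset V, mu p A = 1 := by
  have h := Finset.prod_add (fun _ : V => p) (fun _ : V => 1 - p) Finset.univ
  simp only [prod_const, add_sub_cancel, one_pow] at h
  rw [← Finset.powerset_univ]
  rw [h]
  apply Finset.sum_congr rfl
  intro A _
  rw [mu, compl_eq_univ_sdiff]

lemma sum_mu_superset (p : ℝ) (T : Finset V) :
    ∑ A : Finset V, (if T ⊆ A then mu p A else 0) = p ^ T.card := by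
  classical
  rw [← Finset.sum_filter]
  have hbij : ∑ A ∈ Finset.univ.filter (fun A : Finset V => T ⊆ A), mu p A
      = ∑ B ∈ Tᶜ.powerset, mu p (T ∪ B) := by
    apply Finset.sum_nbij' (i := fun A => A \ T) (j := fun B => T ∪ B)
    · intro A hA
      simp only [mem_filter, mem_univ, true_and] at hA
      simp only [mem_powerset]
      intro x hx
      simp only [mem_sdiff] at hx
      simp [hx.2]
    · intro B hB
      simp only [mem_powerset] at hB
      simp
    · intro A hA
      simp only [mem_filter, mem_univ, true_and] at hA
      exact Finset.union_sdiff_of_subset hA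
    · intro B hB
      simp only [mem_powerset] at hB
      apply Finset.union_sdiff_cancel_left
      rw [Finset.disjoint_left]
      intro a ha haB
      have := hB haB
      simp at this
      exact this ha
    · intro A hA
      simp only [mem_filter, mem_univ, true_and] at hA
      rw [Finset.union_sdiff_of_subset hA]
  rw [hbij]
  have key : ∀ B ∈ Tᶜ.powerset,
      mu p (T ∪ B) = p ^ T.card * (p ^ B.card * (1-p) ^ (Tᶜ \ B).card) := by
    intro B hB
    simp only [mem_powerset] at hB
    have hdisj : Disjoint T B := by
      rw [Finset.disjoint_left]
      intro a ha haB
      have := hB haB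
      simp at this
      exact this ha
    rw [mu, Finset.card_union_of_disjoint hdisj]
    have hcompl : (T ∪ B)ᶜ = Tᶜ \ B := by
      ext x; simp [and_comm]
    rw [hcompl, pow_add, mul_assoc]
  rw [Finset.sum_congr rfl key, ← Finset.mul_sum]
  have h := Finset.prod_add (fun _ : V => p) (fun _ : V => 1 - p) Tᶜ
  simp only [prod_const, add_sub_cancel, one_pow] at h
  rw [← h, mul_one]

/-- The vertex set of a `Sym2`. -/
def s2F (e : Sym2 V) : Finset V := Finset.univ.filter (· ∈ e)

lemma mem_s2F {x : V} {e : Sym2 V} : x ∈ s2F e ↔ x ∈ e := by simp [s2F]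

lemma s2F_pair (u v : V) : s2F s(u,v) = {u, v} := by
  ext x
  simp [mem_s2F, Sym2.mem_iff]

lemma sym2_mem_iff_s2F_subset (e : Sym2 V) (A : Finset V) : e ∈ A.sym2 ↔ s2F e ⊆ A := by
  rw [Finset.mem_sym2_iff]
  constructor
  · intro h x hx; exact h x (mem_s2F.mp hx)
  · intro h a ha; exact h (mem_s2F.mpr ha)

lemma card_s2F {e : Sym2 V} (he : ¬ e.IsDiag) : (s2F e).card = 2 := by
  induction e with
  | _ u v =>
    rw [Sym2.mk_isDiag_iff] at he
    rw [s2F_pair]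
    exact Finset.card_pair he

lemma s2F_inj {e f : Sym2 V} (he : ¬e.IsDiag) (hf : ¬f.IsDiag) (h : s2F e = s2F f) : e = f := by
  induction e with
  | _ a b =>
  induction f with
  | _ c d =>
  rw [s2F_pair, s2F_pair] at h
  rw [Sym2.mk_isDiag_iff] at he hf
  have ha : a = c ∨ a = d := by
    have : a ∈ ({c, d} : Finset V) := h ▸ (by simp)
    simpa using this
  have hb : b = c ∨ b = d := by
    have : b ∈ ({c, d} : Finset V) := h ▸ (by simp)
    simpa using this
  rw [Sym2.eq_iff]
  rcases ha with rfl | rfl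
  · rcases hb with rfl | rfl
    · exact absurd rfl he
    · exact Or.inl ⟨rfl, rfl⟩
  · rcases hb with rfl | rfl
    · exact Or.inr ⟨rfl, rfl⟩
    · exact absurd rfl he

lemma card_union_s2F {e f : Sym2 V} (he : ¬e.IsDiag) (hf : ¬f.IsDiag) (hne : e ≠ f) :
    (s2F e ∪ s2F f).card = if (s2F e ∩ s2F f).Nonempty then 3 else 4 := by
  have h2e := card_s2F he
  have h2f := card_s2F hf
  have hkey := Finset.card_union_add_card_inter (s2F e) (s2F f)
  by_cases hshare : (s2F e ∩ s2F f).Nonempty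
  · rw [if_pos hshare]
    have h1 : 1 ≤ (s2F e ∩ s2F f).card := Finset.card_pos.mpr hshare
    have h2 : (s2F e ∩ s2F f).card ≤ 2 :=
      h2e ▸ Finset.card_le_card (Finset.inter_subset_left)
    have hne2 : (s2F e ∩ s2F f).card ≠ 2 := by
      intro hc
      have he' : s2F e ∩ s2F f = s2F e :=
        Finset.eq_of_subset_of_card_le Finset.inter_subset_left (by omega)
      have hf' : s2F e ∩ s2F f = s2F f :=
        Finset.eq_of_subset_of_card_le Finset.inter_subset_right (by omega)
      exact hne (s2F_inj he hf (he' ▸ hf'))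
    omega
  · rw [if_neg hshare]
    rw [Finset.not_nonempty_iff_eq_empty] at hshare
    rw [hshare] at hkey
    simp only [Finset.card_empty] at hkey
    omega

/-- Cantelli's inequality for finitely supported probability weights. -/
lemma cantelli {α : Type} [Fintype α] [DecidableEq α] (w f : α → ℝ) (hw : ∀ a, 0 ≤ w a)
    (hsum : ∑ a, w a = 1) (m v t : ℝ)
    (hm : ∑ a, w a * f a = m) (hv : ∑ a, w a * (f a - m)^2 ≤ v) (ht : 0 < t) :
    ∑ a ∈ Finset.univ.filter (fun a => f a ≤ m - t), w a ≤ v / (v + t^2) := by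
  classical
  have hv0 : 0 ≤ v := le_trans (Finset.sum_nonneg fun a _ => mul_nonneg (hw a) (sq_nonneg _)) hv
  rcases eq_or_lt_of_le hv0 with hv0' | hvpos
  · rw [← hv0']
    have hz : ∀ a, w a * (f a - m)^2 = 0 := by
      intro a
      have h1 : ∑ a, w a * (f a - m)^2 = 0 := le_antisymm (by rw [hv0']; exact hv)
        (Finset.sum_nonneg fun a _ => mul_nonneg (hw a) (sq_nonneg _))
      have := (Finset.sum_eq_zero_iff_of_nonneg
        (fun a _ => mul_nonneg (hw a) (sq_nonneg _))).mp h1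
      exact this a (mem_univ a)
    have : ∑ a ∈ Finset.univ.filter (fun a => f a ≤ m - t), w a ≤ 0 := by
      apply Finset.sum_nonpos
      intro a ha
      simp only [mem_filter, mem_univ, true_and] at ha
      by_contra hcon
      push_neg at hcon
      have hwpos : 0 < w a := lt_of_le_of_ne (hw a) (by
        intro h; rw [← h] at hcon; exact lt_irrefl _ hcon)
      have := hz a
      have hfm : (f a - m)^2 = 0 := by
        rcases mul_eq_zero.mp this with h | h
        · exact absurd h (ne_of_gt hwpos)
        · exact h
      have : f a = m := by nlinarith [sq_nonneg (f a - m)]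
      linarith
    have h0 : (0:ℝ) / (0 + t^2) = 0 := by
      rw [zero_add, zero_div]
    linarith [h0]
  · set u := v / t with hu
    have hupos : 0 < u := div_pos hvpos ht
    have htu : 0 < t + u := by linarith
    have step : ∀ a, (if f a ≤ m - t then w a else 0) ≤ w a * (m - f a + u)^2 / (t+u)^2 := by
      intro a
      by_cases h : f a ≤ m - t
      · simp only [h, if_true]
        have h1 : t + u ≤ m - f a + u := by linarith
        have h2 : (t+u)^2 ≤ (m - f a + u)^2 := by nlinarith
        rw [le_div_iff₀ (by positivity)]
        exact mul_le_mul_of_nonneg_left h2 (hw a)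
      · simp only [h, if_false]
        exact div_nonneg (mul_nonneg (hw a) (sq_nonneg _)) (sq_nonneg _)
    have hle : ∑ a ∈ Finset.univ.filter (fun a => f a ≤ m - t), w a
        ≤ ∑ a, w a * (m - f a + u)^2 / (t+u)^2 := by
      rw [Finset.sum_filter]
      exact Finset.sum_le_sum fun a _ => step a
    have hA : ∑ a, w a * (m - f a + u)^2
        = ∑ a, (w a * (f a - m)^2 + (2*u*m + u^2) * w a - 2*u*(w a * f a)) := by
      apply Finset.sum_congr rfl
      intro a _
      ring
    have hvar2 : ∑ a, w a * (m - f a + u)^2 ≤ v + u^2 := by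
      rw [hA, Finset.sum_sub_distrib, Finset.sum_add_distrib, ← Finset.mul_sum,
        ← Finset.mul_sum, hsum, hm]
      nlinarith [hv, sq_nonneg u]
    have hfinal : ∑ a, w a * (m - f a + u)^2 / (t+u)^2 ≤ (v + u^2)/(t+u)^2 := by
      rw [← Finset.sum_div]
      apply div_le_div_of_nonneg_right hvar2 (by positivity) |>.trans_eq rfl
    have heq : (v + u^2)/(t+u)^2 = v / (v + t^2) := by
      rw [hu]
      field_simp
      ring
    linarith

lemma sum_mu_sym2 (p : ℝ) (e : Sym2 V) :
    ∑ A : Finset V, (if e ∈ A.sym2 then mu p A else 0) = p ^ (s2F e).card := by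
  rw [← sum_mu_superset]
  apply Finset.sum_congr rfl
  intro A _
  simp only [sym2_mem_iff_s2F_subset]

lemma sum_mu_sym2_pair (p : ℝ) (e f : Sym2 V) :
    ∑ A : Finset V, (if e ∈ A.sym2 ∧ f ∈ A.sym2 then mu p A else 0)
      = p ^ (s2F e ∪ s2F f).card := by
  rw [← sum_mu_superset]
  apply Finset.sum_congr rfl
  intro A _
  simp only [sym2_mem_iff_s2F_subset, Finset.union_subset_iff]

lemma pair_bound (G : SimpleGraph V) [DecidableRel G.Adj] {p : ℝ} (hp0 : 0 ≤ p) (hp1 : p ≤ 1)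
    (u v : V) (heE : s(u,v) ∈ G.edgeFinset) :
    ∑ f ∈ G.edgeFinset, ((p:ℝ) ^ (s2F (s(u,v)) ∪ s2F f).card - p^4)
      ≤ (p^2 - p^4) + 2*(Fintype.card V)*(p^3 - p^4) := by
  classical
  set E := G.edgeFinset with hE
  set n := Fintype.card V with hn
  have hed : ¬ (s(u,v) : Sym2 V).IsDiag :=
    G.not_isDiag_of_mem_edgeSet (mem_edgeFinset.mp heE)
  rw [← Finset.add_sum_erase _ _ heE]
  have hself : (s2F (s(u,v)) ∪ s2F (s(u,v))).card = 2 := by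
    rw [Finset.union_self, card_s2F hed]
  rw [hself]
  apply add_le_add le_rfl
  have hterm : ∀ f ∈ E.erase s(u,v), (p:ℝ) ^ (s2F (s(u,v)) ∪ s2F f).card - p^4
      ≤ if (s2F (s(u,v)) ∩ s2F f).Nonempty then p^3 - p^4 else 0 := by
    intro f hf
    obtain ⟨hfe, hfE⟩ := Finset.mem_erase.mp hf
    have hfd : ¬ f.IsDiag := G.not_isDiag_of_mem_edgeSet (mem_edgeFinset.mp hfE)
    rw [card_union_s2F hed hfd (Ne.symm hfe)]
    split_ifs <;> norm_num
  have hp34 : 0 ≤ p^3 - p^4 := by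
    have h : p^3 - p^4 = p^3 * (1-p) := by ring
    rw [h]
    exact mul_nonneg (pow_nonneg hp0 3) (by linarith)
  have hcard : (((E.erase s(u,v)).filter
      (fun f => (s2F (s(u,v)) ∩ s2F f).Nonempty)).card : ℝ) ≤ 2*n := by
    have hsub : (E.erase s(u,v)).filter (fun f => (s2F (s(u,v)) ∩ s2F f).Nonempty)
        ⊆ G.incidenceFinset u ∪ G.incidenceFinset v := by
      intro f hf
      simp only [Finset.mem_filter, Finset.mem_erase] at hf
      obtain ⟨⟨hfe, hfE⟩, x, hx⟩ := hf
      rw [Finset.mem_inter, mem_s2F, mem_s2F] at hx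
      rw [Finset.mem_union, mem_incidenceFinset, mem_incidenceFinset]
      rcases Sym2.mem_iff.mp hx.1 with rfl | rfl
      · exact Or.inl ⟨mem_edgeFinset.mp hfE, hx.2⟩
      · exact Or.inr ⟨mem_edgeFinset.mp hfE, hx.2⟩
    have h1 : ((E.erase s(u,v)).filter (fun f => (s2F (s(u,v)) ∩ s2F f).Nonempty)).card
        ≤ 2 * n := by
      refine le_trans (Finset.card_le_card hsub) (le_trans (Finset.card_union_le _ _) ?_)
      rw [card_incidenceFinset_eq_degree, card_incidenceFinset_eq_degree]
      have h2 := G.degree_lt_card_verts u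
      have h3 := G.degree_lt_card_verts v
      omega
    calc (((E.erase s(u,v)).filter (fun f => (s2F (s(u,v)) ∩ s2F f).Nonempty)).card : ℝ)
        ≤ ((2*n : ℕ) : ℝ) := by exact_mod_cast h1
      _ = 2*n := by push_cast; ring
  calc ∑ f ∈ E.erase s(u,v), ((p:ℝ) ^ (s2F (s(u,v)) ∪ s2F f).card - p^4)
      ≤ ∑ f ∈ E.erase s(u,v), (if (s2F (s(u,v)) ∩ s2F f).Nonempty then p^3 - p^4 else 0) :=
        Finset.sum_le_sum hterm
    _ = ∑ f ∈ (E.erase s(u,v)).filter (fun f => (s2F (s(u,v)) ∩ s2F f).Nonempty), (p^3 - p^4) :=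
        (Finset.sum_filter _ _).symm
    _ = (((E.erase s(u,v)).filter (fun f => (s2F (s(u,v)) ∩ s2F f).Nonempty)).card : ℝ)
          * (p^3 - p^4) := by rw [Finset.sum_const, nsmul_eq_mul]
    _ ≤ (2*n) * (p^3 - p^4) := mul_le_mul_of_nonneg_right hcard hp34
    _ = 2*n*(p^3 - p^4) := by ring

lemma main_bound (G : SimpleGraph V) [DecidableRel G.Adj]
    {p : ℝ} (h0 : 0 < p) (h1 : p < 1) (k : ℕ)
    (hcond : (k:ℝ) ≤ (G.edgeFinset.card : ℝ) * p^2 -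
      Real.sqrt ((G.edgeFinset.card : ℝ) * p^2
        + 2*(G.edgeFinset.card : ℝ)*(Fintype.card V : ℝ)*p^3
        - (G.edgeFinset.card : ℝ)*(2*(Fintype.card V : ℝ)+1)*p^4)) :
    ∑ A ∈ Finset.univ.filter
      (fun A : Finset V => ((G.edgeFinset.filter (· ∈ A.sym2)).card : ℝ) ≤ (k:ℝ) - 1),
      mu p A < 1/2 := by
  classical
  have hp0 : (0:ℝ) ≤ p := le_of_lt h0
  have hple : p ≤ 1 := le_of_lt h1
  set E := G.edgeFinset with hE
  set n := Fintype.card V with hn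
  set r : ℝ := (E.card : ℝ) with hr
  set F : Finset V → ℝ := fun A => ((E.filter (· ∈ A.sym2)).card : ℝ) with hF
  set m : ℝ := r * p^2 with hm
  set σ2 : ℝ := r * p^2 + 2*r*(n:ℝ)*p^3 - r*(2*(n:ℝ)+1)*p^4 with hσ2
  have hFeq : ∀ A : Finset V, F A = ∑ e ∈ E, (if e ∈ A.sym2 then (1:ℝ) else 0) := by
    intro A
    rw [hF]
    simp only [Finset.card_filter]
    push_cast
    rfl
  have hEX : ∑ A : Finset V, mu p A * F A = m := by
    have h1 : ∀ A : Finset V, mu p A * F A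
        = ∑ e ∈ E, (if e ∈ A.sym2 then mu p A else 0) := by
      intro A
      rw [hFeq A, Finset.mul_sum]
      apply Finset.sum_congr rfl
      intro e _
      split_ifs <;> simp
    rw [Finset.sum_congr rfl (fun A _ => h1 A), Finset.sum_comm]
    have h2 : ∀ e ∈ E, ∑ A : Finset V, (if e ∈ A.sym2 then mu p A else 0) = p^2 := by
      intro e heE
      rw [sum_mu_sym2 p e, card_s2F (G.not_isDiag_of_mem_edgeSet (mem_edgeFinset.mp heE))]
    rw [Finset.sum_congr rfl h2, Finset.sum_const, nsmul_eq_mul]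
  have hEX2 : ∑ A : Finset V, mu p A * (F A)^2
      = ∑ e ∈ E, ∑ f ∈ E, (p:ℝ) ^ (s2F e ∪ s2F f).card := by
    have h1 : ∀ A : Finset V, mu p A * (F A)^2
        = ∑ e ∈ E, ∑ f ∈ E, (if e ∈ A.sym2 ∧ f ∈ A.sym2 then mu p A else 0) := by
      intro A
      rw [hFeq A, sq, Finset.sum_mul_sum, Finset.mul_sum]
      apply Finset.sum_congr rfl
      intro e _
      rw [Finset.mul_sum]
      apply Finset.sum_congr rfl
      intro f _
      by_cases hP : e ∈ A.sym2 <;> by_cases hQ : f ∈ A.sym2 <;> simp [hP, hQ]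
    rw [Finset.sum_congr rfl (fun A _ => h1 A), Finset.sum_comm]
    apply Finset.sum_congr rfl
    intro e _
    rw [Finset.sum_comm]
    apply Finset.sum_congr rfl
    intro f _
    exact sum_mu_sym2_pair p e f
  have hVar : ∑ A : Finset V, mu p A * (F A - m)^2
      = (∑ A : Finset V, mu p A * (F A)^2) - m^2 := by
    have h1 : ∀ A : Finset V, mu p A * (F A - m)^2
        = mu p A * (F A)^2 - 2*m*(mu p A * F A) + m^2 * mu p A := by intro A; ring
    rw [Finset.sum_congr rfl (fun A _ => h1 A), Finset.sum_add_distrib, Finset.sum_sub_distrib,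
      ← Finset.mul_sum, ← Finset.mul_sum, hEX, sum_mu]
    ring
  have hpair : ∀ e ∈ E, ∑ f ∈ E, ((p:ℝ) ^ (s2F e ∪ s2F f).card - p^4)
      ≤ (p^2 - p^4) + 2*(n:ℝ)*(p^3 - p^4) := by
    intro e
    induction e with
    | _ u v => exact fun heE => pair_bound G hp0 hple u v heE
  have hVarle : ∑ A : Finset V, mu p A * (F A - m)^2 ≤ σ2 := by
    rw [hVar, hEX2]
    have hsplit : ∀ e ∈ E, ∑ f ∈ E, ((p:ℝ) ^ (s2F e ∪ s2F f).card - p^4)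
        = (∑ f ∈ E, (p:ℝ) ^ (s2F e ∪ s2F f).card) - r * p^4 := by
      intro e _
      rw [Finset.sum_sub_distrib, Finset.sum_const, nsmul_eq_mul]
    have hstep : (∑ e ∈ E, ∑ f ∈ E, (p:ℝ) ^ (s2F e ∪ s2F f).card) - m^2
        = ∑ e ∈ E, (∑ f ∈ E, ((p:ℝ) ^ (s2F e ∪ s2F f).card - p^4)) := by
      rw [Finset.sum_congr rfl hsplit, Finset.sum_sub_distrib, Finset.sum_const, nsmul_eq_mul]
      have hmm : m^2 = r*(r*p^4) := by rw [hm]; ring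
      rw [hmm]
    rw [hstep]
    calc ∑ e ∈ E, (∑ f ∈ E, ((p:ℝ) ^ (s2F e ∪ s2F f).card - p^4))
        ≤ ∑ _e ∈ E, ((p^2 - p^4) + 2*(n:ℝ)*(p^3 - p^4)) := Finset.sum_le_sum hpair
      _ = r * ((p^2 - p^4) + 2*(n:ℝ)*(p^3 - p^4)) := by
          rw [Finset.sum_const, nsmul_eq_mul]
      _ = σ2 := by rw [hσ2]; ring
  have hσ2nn : 0 ≤ σ2 :=
    le_trans (Finset.sum_nonneg fun A _ =>
      mul_nonneg (mu_nonneg hp0 hple A) (sq_nonneg _)) hVarle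
  have hsqrt : Real.sqrt σ2 ≤ m - k := by
    rw [hσ2, hm, hr]
    linarith [hcond]
  set t : ℝ := m - k + 1 with ht_def
  have hsqnn := Real.sqrt_nonneg σ2
  have ht1 : Real.sqrt σ2 + 1 ≤ t := by rw [ht_def]; linarith
  have ht0 : 0 < t := by linarith
  have ht2 : σ2 < t^2 := by
    have h := Real.sq_sqrt hσ2nn
    nlinarith
  have hcant := cantelli (mu p) F (mu_nonneg hp0 hple) (sum_mu p) m σ2 t hEX hVarle ht0
  have hkm : (k:ℝ) - 1 = m - t := by rw [ht_def]; ring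
  have hfilter : Finset.univ.filter
      (fun A : Finset V => ((G.edgeFinset.filter (· ∈ A.sym2)).card : ℝ) ≤ (k:ℝ) - 1)
      = Finset.univ.filter (fun A : Finset V => F A ≤ m - t) := by
    apply Finset.filter_congr
    intro A _
    rw [hkm]
  rw [hfilter]
  calc ∑ A ∈ Finset.univ.filter (fun A : Finset V => F A ≤ m - t), mu p A
      ≤ σ2 / (σ2 + t^2) := hcant
    _ < 1/2 := by
        rw [div_lt_iff₀ (by nlinarith)]
        nlinarith

end Aux

/-- If `r` satisfies `r·pᵢ² − √(r·pᵢ² + 2rn·pᵢ³ − r(2n+1)·pᵢ⁴) ≥ rᵢ` for `i = 1, 2`, then every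
graph on `n` vertices with `r` edges has a vertex bipartition with at least `r₁` edges inside
one part and at least `r₂` edges inside the other. -/
theorem statement3 (n r₁ r₂ r : ℕ) (hn : 0 < n) (hr₁ : 0 < r₁) (hr₂ : 0 < r₂) (hr : 0 < r)
    (hrmax : 2 * r ≤ n * (n - 1))
    (hineq : ∀ i ∈ ({r₁, r₂} : Set ℕ),
      (i : ℝ) ≤ r * pratio r₁ r₂ i ^ 2 -
        Real.sqrt (r * pratio r₁ r₂ i ^ 2 + 2 * r * n * pratio r₁ r₂ i ^ 3 -
          r * (2 * n + 1) * pratio r₁ r₂ i ^ 4)) :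
    ∀ (V : Type) [Fintype V] [DecidableEq V] (G : SimpleGraph V) [DecidableRel G.Adj],
      Fintype.card V = n → G.edgeFinset.card = r →
      ∃ V₁ V₂ : Finset V, Disjoint V₁ V₂ ∧ V₁ ∪ V₂ = Finset.univ ∧
        r₁ ≤ (G.edgeFinset.filter (· ∈ V₁.sym2)).card ∧
        r₂ ≤ (G.edgeFinset.filter (· ∈ V₂.sym2)).card := by
  intro V _ _ G _ hcard hedge
  classical
  set p₁ : ℝ := pratio r₁ r₂ r₁ with hp₁
  set p₂ : ℝ := pratio r₁ r₂ r₂ with hp₂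
  have hs1 : 0 < Real.sqrt r₁ := Real.sqrt_pos.mpr (by exact_mod_cast hr₁)
  have hs2 : 0 < Real.sqrt r₂ := Real.sqrt_pos.mpr (by exact_mod_cast hr₂)
  have hden : 0 < Real.sqrt r₁ + Real.sqrt r₂ := by linarith
  have h10 : 0 < p₁ := div_pos hs1 hden
  have h20 : 0 < p₂ := div_pos hs2 hden
  have hsum12 : p₁ + p₂ = 1 := by
    rw [hp₁, hp₂, pratio, pratio, ← add_div, div_self (ne_of_gt hden)]
  have h11 : p₁ < 1 := by linarith
  have h21 : p₂ < 1 := by linarith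
  have h2eq : 1 - p₁ = p₂ := by linarith
  have h1eq : 1 - p₂ = p₁ := by linarith
  by_contra hcon
  push_neg at hcon
  -- first bound
  have hcond1 : (r₁:ℝ) ≤ (G.edgeFinset.card : ℝ) * p₁^2 -
      Real.sqrt ((G.edgeFinset.card : ℝ) * p₁^2
        + 2*(G.edgeFinset.card : ℝ)*(Fintype.card V : ℝ)*p₁^3
        - (G.edgeFinset.card : ℝ)*(2*(Fintype.card V : ℝ)+1)*p₁^4) := by
    rw [hedge, hcard]
    have h := hineq r₁ (Set.mem_insert _ _)
    rw [← hp₁] at h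
    calc (r₁:ℝ) ≤ r * p₁ ^ 2 - Real.sqrt (r * p₁ ^ 2 + 2 * r * n * p₁ ^ 3 -
          r * (2 * n + 1) * p₁ ^ 4) := h
      _ = (r:ℝ) * p₁^2 - Real.sqrt ((r:ℝ) * p₁^2 + 2*(r:ℝ)*(n:ℝ)*p₁^3
          - (r:ℝ)*(2*(n:ℝ)+1)*p₁^4) := by ring_nf
  have hcond2 : (r₂:ℝ) ≤ (G.edgeFinset.card : ℝ) * p₂^2 -
      Real.sqrt ((G.edgeFinset.card : ℝ) * p₂^2
        + 2*(G.edgeFinset.card : ℝ)*(Fintype.card V : ℝ)*p₂^3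
        - (G.edgeFinset.card : ℝ)*(2*(Fintype.card V : ℝ)+1)*p₂^4) := by
    rw [hedge, hcard]
    have h := hineq r₂ (Set.mem_insert_of_mem _ rfl)
    rw [← hp₂] at h
    calc (r₂:ℝ) ≤ r * p₂ ^ 2 - Real.sqrt (r * p₂ ^ 2 + 2 * r * n * p₂ ^ 3 -
          r * (2 * n + 1) * p₂ ^ 4) := h
      _ = (r:ℝ) * p₂^2 - Real.sqrt ((r:ℝ) * p₂^2 + 2*(r:ℝ)*(n:ℝ)*p₂^3
          - (r:ℝ)*(2*(n:ℝ)+1)*p₂^4) := by ring_nf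
  have hL1 := main_bound G h10 h11 r₁ hcond1
  have hL2 := main_bound G h20 h21 r₂ hcond2
  -- swap lemma
  have hswap : ∑ A ∈ Finset.univ.filter
        (fun A : Finset V => ((G.edgeFinset.filter (· ∈ Aᶜ.sym2)).card : ℝ) ≤ (r₂:ℝ) - 1),
        mu p₁ A
      = ∑ B ∈ Finset.univ.filter
        (fun B : Finset V => ((G.edgeFinset.filter (· ∈ B.sym2)).card : ℝ) ≤ (r₂:ℝ) - 1),
        mu p₂ B := by
    apply Finset.sum_nbij' (i := fun A => Aᶜ) (j := fun B => Bᶜ)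
    · intro A hA
      simp only [Finset.mem_filter, Finset.mem_univ, true_and] at *
      exact hA
    · intro B hB
      simp only [Finset.mem_filter, Finset.mem_univ, true_and] at *
      rw [compl_compl]
      exact hB
    · intro A _
      exact compl_compl A
    · intro B _
      exact compl_compl B
    · intro A _
      rw [mu, mu, compl_compl, h1eq, h2eq]
      ring
  -- covering
  have hcover : ∀ A : Finset V,
      ((G.edgeFinset.filter (· ∈ A.sym2)).card : ℝ) ≤ (r₁:ℝ) - 1 ∨
      ((G.edgeFinset.filter (· ∈ Aᶜ.sym2)).card : ℝ) ≤ (r₂:ℝ) - 1 := by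
    intro A
    by_cases hA1 : r₁ ≤ (G.edgeFinset.filter (· ∈ A.sym2)).card
    · right
      have h := hcon A Aᶜ disjoint_compl_right (Finset.union_compl A) hA1
      have h' : ((G.edgeFinset.filter (· ∈ Aᶜ.sym2)).card : ℝ) + 1 ≤ (r₂:ℝ) := by
        exact_mod_cast Nat.succ_le_of_lt h
      linarith
    · left
      push_neg at hA1
      have h' : ((G.edgeFinset.filter (· ∈ A.sym2)).card : ℝ) + 1 ≤ (r₁:ℝ) := by
        exact_mod_cast Nat.succ_le_of_lt hA1
      linarith
  -- combine
  have honele : (1:ℝ) ≤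
      (∑ A ∈ Finset.univ.filter
        (fun A : Finset V => ((G.edgeFinset.filter (· ∈ A.sym2)).card : ℝ) ≤ (r₁:ℝ) - 1),
        mu p₁ A)
      + ∑ A ∈ Finset.univ.filter
        (fun A : Finset V => ((G.edgeFinset.filter (· ∈ Aᶜ.sym2)).card : ℝ) ≤ (r₂:ℝ) - 1),
        mu p₁ A := by
    have hterm : ∀ A : Finset V, mu p₁ A ≤
        (if ((G.edgeFinset.filter (· ∈ A.sym2)).card : ℝ) ≤ (r₁:ℝ) - 1 then mu p₁ A else 0)
        + (if ((G.edgeFinset.filter (· ∈ Aᶜ.sym2)).card : ℝ) ≤ (r₂:ℝ) - 1 then mu p₁ A else 0)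
        := by
      intro A
      have hnn := mu_nonneg (le_of_lt h10) (le_of_lt h11) A
      rcases hcover A with h | h
      · rw [if_pos h]
        split_ifs <;> linarith
      · rw [if_pos h]
        split_ifs <;> linarith
    calc (1:ℝ) = ∑ A : Finset V, mu p₁ A := (sum_mu p₁).symm
      _ ≤ ∑ A : Finset V,
          ((if ((G.edgeFinset.filter (· ∈ A.sym2)).card : ℝ) ≤ (r₁:ℝ) - 1 then mu p₁ A else 0)
          + (if ((G.edgeFinset.filter (· ∈ Aᶜ.sym2)).card : ℝ) ≤ (r₂:ℝ) - 1 then mu p₁ A else 0))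
          := Finset.sum_le_sum fun A _ => hterm A
      _ = _ := by
          rw [Finset.sum_add_distrib, ← Finset.sum_filter, ← Finset.sum_filter]
  rw [hswap] at honele
  linarith
end

section
/- Let k be a positive integer, let G be a finite simple graph on n vertices with minimum degree δ ≥ k, and let 0 ≤ p ≤ 1 be a real number. Then the total k-domination number of G satisfies γₖᵗ(G) ≤ n·(p + Σ_{i=0}^{k−1} (k−i)·C(δ,i)·pⁱ·(1−p)^{δ−i}), where C(δ,i) denotes the binomial coefficient. -/
open Finset SimpleGraph

lemma total_weight {α : Type*} [DecidableEq α] (p q : ℝ) (s : Finset α) :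
    ∑ A ∈ s.powerset, p ^ A.card * q ^ (s.card - A.card) = (p + q) ^ s.card := by
  rw [← Finset.prod_const, Finset.prod_add]
  refine Finset.sum_congr rfl fun t ht => ?_
  rw [Finset.mem_powerset] at ht
  rw [Finset.prod_const, Finset.prod_const, Finset.card_sdiff_of_subset ht]

lemma split_weight {V : Type*} [Fintype V] [DecidableEq V] (p q : ℝ) (hpq : p + q = 1)
    (N : Finset V) (h : Finset V → ℝ) :
    ∑ A ∈ (Finset.univ : Finset V).powerset,
        p ^ A.card * q ^ (Fintype.card V - A.card) * h (A ∩ N)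
      = ∑ B ∈ N.powerset, p ^ B.card * q ^ (N.card - B.card) * h B := by
  have key : ∑ A ∈ (Finset.univ : Finset V).powerset,
      p ^ A.card * q ^ (Fintype.card V - A.card) * h (A ∩ N)
      = ∑ x ∈ N.powerset ×ˢ Nᶜ.powerset,
          (p ^ x.1.card * q ^ (N.card - x.1.card) * h x.1) *
          (p ^ x.2.card * q ^ (Nᶜ.card - x.2.card)) := by
    refine Finset.sum_nbij' (fun A => (A ∩ N, A \ N)) (fun x => x.1 ∪ x.2) ?_ ?_ ?_ ?_ ?_
    · intro A _
      simp only [Finset.mem_product, Finset.mem_powerset]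
      refine ⟨Finset.inter_subset_right, fun x hx => ?_⟩
      rw [Finset.mem_sdiff] at hx
      simpa [Finset.mem_compl] using hx.2
    · intro x hx; simp [Finset.mem_powerset]
    · intro A _
      dsimp only
      ext a; simp only [Finset.mem_union, Finset.mem_inter, Finset.mem_sdiff]; tauto
    · intro x hx
      simp only [Finset.mem_product, Finset.mem_powerset] at hx
      obtain ⟨h1, h2⟩ := hx
      have hdis : ∀ a ∈ x.2, a ∉ N := fun a ha =>
        (Finset.mem_compl.1 (h2 ha))
      ext
      · rw [Finset.union_inter_distrib_right]
        have e0 : x.2 ∩ N = ∅ := by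
          rw [Finset.eq_empty_iff_forall_notMem]
          intro a ha; rw [Finset.mem_inter] at ha; exact hdis a ha.1 ha.2
        rw [e0, Finset.union_empty, Finset.inter_eq_left.2 h1]
      · rw [Finset.union_sdiff_distrib]
        have e1 : x.1 \ N = ∅ := by rw [Finset.sdiff_eq_empty_iff_subset]; exact h1
        have e2 : x.2 \ N = x.2 := by
          rw [Finset.sdiff_eq_self_iff_disjoint]
          exact Finset.disjoint_left.2 hdis
        rw [e1, e2, Finset.empty_union]
    · intro A _
      dsimp only
      have hc1 : (A ∩ N).card ≤ N.card := Finset.card_le_card Finset.inter_subset_right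
      have hc2 : (A \ N).card ≤ Nᶜ.card := by
        apply Finset.card_le_card; intro a ha
        rw [Finset.mem_sdiff] at ha; simp [Finset.mem_compl, ha.2]
      have hcard : A.card = (A ∩ N).card + (A \ N).card :=
        (Finset.card_inter_add_card_sdiff A N).symm
      have hn : Fintype.card V = N.card + Nᶜ.card := by
        rw [← Finset.card_union_of_disjoint disjoint_compl_right,
          Finset.union_compl, Finset.card_univ]
      have hsub : Fintype.card V - ((A ∩ N).card + (A \ N).card)
          = (N.card - (A ∩ N).card) + (Nᶜ.card - (A \ N).card) := by omega
      rw [hcard, hsub, pow_add, pow_add]; ring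
  rw [key, Finset.sum_product]
  simp_rw [← Finset.mul_sum, total_weight p q, hpq, one_pow, mul_one]

/-- Henning–Kazemi bound on the total `k`-domination number: a graph on `n` vertices with
minimum degree `δ ≥ k` has a total `k`-dominating set of size at most
`n(p + Σ_{i<k} (k−i)·C(δ,i)·pⁱ(1−p)^{δ−i})` for any `0 ≤ p ≤ 1`. -/
theorem statement5 (k δ : ℕ) (hk : 0 < k) (hkδ : k ≤ δ) (p : ℝ) (hp0 : 0 ≤ p) (hp1 : p ≤ 1)
    {V : Type*} [Fintype V] [DecidableEq V] (G : SimpleGraph V) [DecidableRel G.Adj]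
    (hdeg : ∀ v : V, δ ≤ G.degree v) :
    ∃ D : Finset V, (∀ v : V, k ≤ (G.neighborFinset v ∩ D).card) ∧
      (D.card : ℝ) ≤ (Fintype.card V : ℝ) *
        (p + ∑ i ∈ Finset.range k,
          ((k : ℝ) - i) * (δ.choose i : ℝ) * p ^ i * (1 - p) ^ (δ - i)) := by
  classical
  set q : ℝ := 1 - p with hqdef
  have hq0 : 0 ≤ q := by simp [hqdef]; linarith
  have hpq : p + q = 1 := by simp [hqdef]
  set n := Fintype.card V with hn
  set S : ℝ := ∑ i ∈ Finset.range k,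
      ((k : ℝ) - i) * (δ.choose i : ℝ) * p ^ i * q ^ (δ - i) with hS
  set w : Finset V → ℝ := fun A => p ^ A.card * q ^ (n - A.card) with hw
  have hw0 : ∀ A, 0 ≤ w A := fun A =>
    mul_nonneg (pow_nonneg hp0 _) (pow_nonneg hq0 _)
  have hwsum : ∑ A ∈ (Finset.univ : Finset V).powerset, w A = 1 := by
    have := total_weight p q (Finset.univ : Finset V)
    rw [hpq, one_pow, Finset.card_univ] at this
    simpa [hw, hn] using this
  -- shrunken neighborhoods of size exactly δ
  have hNex : ∀ v : V, ∃ t ⊆ G.neighborFinset v, t.card = δ := fun v =>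
    Finset.exists_subset_card_eq (by rw [G.card_neighborFinset_eq_degree]; exact hdeg v)
  choose N' hN'sub hN'card using hNex
  set cost : Finset V → ℕ := fun A => A.card + ∑ v : V, (k - (A ∩ N' v).card) with hcost
  -- expectation of |A|
  have E1 : ∑ A ∈ (Finset.univ : Finset V).powerset, w A * (A.card : ℝ) = n * p := by
    have hcardsum : ∀ A : Finset V, (A.card : ℝ) = ∑ v : V, ((A ∩ {v}).card : ℝ) := by
      intro A
      have : ∀ v : V, ((A ∩ {v}).card : ℝ) = if v ∈ A then 1 else 0 := by
        intro v
        by_cases hv : v ∈ A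
        · rw [Finset.inter_singleton_of_mem hv]; simp [hv]
        · rw [Finset.inter_singleton_of_notMem hv]; simp [hv]
      simp_rw [this]
      rw [Finset.sum_ite_mem, Finset.univ_inter, Finset.sum_const]
      simp
    rw [show (∑ A ∈ (Finset.univ : Finset V).powerset, w A * (A.card : ℝ))
        = ∑ A ∈ (Finset.univ : Finset V).powerset, ∑ v : V, w A * ((A ∩ {v}).card : ℝ)
      from Finset.sum_congr rfl fun A _ => by rw [hcardsum A, Finset.mul_sum]]
    rw [Finset.sum_comm]
    have : ∀ v : V, ∑ A ∈ (Finset.univ : Finset V).powerset, w A * ((A ∩ {v}).card : ℝ)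
        = p := by
      intro v
      have hsp := split_weight p q hpq {v} (fun B => (B.card : ℝ))
      have hps : ({v} : Finset V).powerset = {∅, {v}} := by
        rw [show ({v} : Finset V) = insert v ∅ from rfl, Finset.powerset_insert,
          Finset.powerset_empty]
        rfl
      rw [hw, hn, hsp, hps, Finset.sum_insert (Finset.notMem_singleton.2 (Ne.symm (Finset.singleton_ne_empty v))), Finset.sum_singleton]
      simp
    simp_rw [this]
    rw [Finset.sum_const, Finset.card_univ]
    simp [hn, mul_comm]
  -- expectation of the penalty for each vertex
  have E2 : ∀ v : V, ∑ A ∈ (Finset.univ : Finset V).powerset,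
      w A * (((k - (A ∩ N' v).card : ℕ)) : ℝ) = S := by
    intro v
    have hsplit := split_weight p q hpq (N' v) (fun B => ((k - B.card : ℕ) : ℝ))
    rw [hw, hn, hsplit]
    have happ := Finset.sum_powerset_apply_card
      (fun m => p ^ m * q ^ ((N' v).card - m) * ((k - m : ℕ) : ℝ)) (x := N' v)
    rw [happ, hN'card v]
    have hzero : ∀ x ∈ Finset.range (δ + 1), x ∉ Finset.range k →
        δ.choose x • (p ^ x * q ^ (δ - x) * ((k - x : ℕ) : ℝ)) = 0 := by
      intro x _ hx
      rw [Finset.mem_range, not_lt] at hx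
      rw [Nat.sub_eq_zero_of_le hx]
      simp
    rw [← Finset.sum_subset (Finset.range_subset_range.2 (Nat.le_succ_of_le hkδ)) hzero, hS]
    refine Finset.sum_congr rfl fun i hi => ?_
    rw [Finset.mem_range] at hi
    rw [nsmul_eq_mul, Nat.cast_sub (le_of_lt hi)]
    ring
  -- total expectation
  have Etot : ∑ A ∈ (Finset.univ : Finset V).powerset, w A * (cost A : ℝ)
      = n * (p + S) := by
    have : ∀ A : Finset V, (cost A : ℝ)
        = (A.card : ℝ) + ∑ v : V, (((k - (A ∩ N' v).card : ℕ)) : ℝ) := by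
      intro A
      rw [hcost]
      push_cast [Nat.cast_sum]
      ring
    simp_rw [this, mul_add, Finset.mul_sum]
    rw [Finset.sum_add_distrib, E1, Finset.sum_comm]
    simp_rw [E2]
    rw [Finset.sum_const, Finset.card_univ]
    push_cast [hn]
    ring
  -- there exists a cheap A
  have hexA : ∃ A : Finset V, (cost A : ℝ) ≤ n * (p + S) := by
    by_contra hcon
    push_neg at hcon
    have hpos : ∃ A ∈ (Finset.univ : Finset V).powerset, (0 : ℝ) < w A := by
      apply Finset.exists_lt_of_sum_lt (f := fun _ => (0 : ℝ))
      rw [hwsum, Finset.sum_const, smul_zero]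
      norm_num
    obtain ⟨A₀, hA₀mem, hA₀pos⟩ := hpos
    have hlt : ∑ A ∈ (Finset.univ : Finset V).powerset, w A * (n * (p + S))
        < ∑ A ∈ (Finset.univ : Finset V).powerset, w A * (cost A : ℝ) := by
      refine Finset.sum_lt_sum (fun A _ => ?_) ⟨A₀, hA₀mem, ?_⟩
      · exact mul_le_mul_of_nonneg_left (le_of_lt (hcon A)) (hw0 A)
      · exact mul_lt_mul_of_pos_left (hcon A₀) hA₀pos
    rw [← Finset.sum_mul, hwsum, one_mul, Etot] at hlt
    exact lt_irrefl _ hlt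
  obtain ⟨A, hA⟩ := hexA
  -- repair A into a total k-dominating set
  have hrep : ∀ v : V, ∃ F ⊆ G.neighborFinset v \ A,
      F.card = k - (G.neighborFinset v ∩ A).card := by
    intro v
    apply Finset.exists_subset_card_eq
    have h1 : (G.neighborFinset v ∩ A).card + (G.neighborFinset v \ A).card
        = (G.neighborFinset v).card := Finset.card_inter_add_card_sdiff _ _
    have h2 : δ ≤ (G.neighborFinset v).card := by
      rw [G.card_neighborFinset_eq_degree]; exact hdeg v
    omega
  choose F hFsub hFcard using hrep
  refine ⟨A ∪ Finset.univ.biUnion F, fun v => ?_, ?_⟩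
  · -- domination
    have hsubset : (G.neighborFinset v ∩ A) ∪ F v
        ⊆ G.neighborFinset v ∩ (A ∪ Finset.univ.biUnion F) := by
      intro a ha
      rw [Finset.mem_union] at ha
      rcases ha with ha | ha
      · rw [Finset.mem_inter] at ha ⊢
        exact ⟨ha.1, Finset.mem_union_left _ ha.2⟩
      · rw [Finset.mem_inter]
        have := hFsub v ha
        rw [Finset.mem_sdiff] at this
        exact ⟨this.1, Finset.mem_union_right _
          (Finset.mem_biUnion.2 ⟨v, Finset.mem_univ v, ha⟩)⟩
    have hdisj : Disjoint (G.neighborFinset v ∩ A) (F v) := by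
      refine Finset.disjoint_left.2 fun a ha haF => ?_
      have := hFsub v haF
      rw [Finset.mem_sdiff] at this
      exact this.2 (Finset.mem_inter.1 ha).2
    have hcard := Finset.card_le_card hsubset
    rw [Finset.card_union_of_disjoint hdisj, hFcard v] at hcard
    omega
  · -- cardinality bound
    have hcard1 : (A ∪ Finset.univ.biUnion F).card ≤ cost A := by
      calc (A ∪ Finset.univ.biUnion F).card
          ≤ A.card + (Finset.univ.biUnion F).card := Finset.card_union_le _ _
        _ ≤ A.card + ∑ v : V, (F v).card := by
            gcongr; exact Finset.card_biUnion_le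
        _ ≤ A.card + ∑ v : V, (k - (A ∩ N' v).card) := by
            gcongr with v
            rw [hFcard v]
            apply Nat.sub_le_sub_left
            apply Finset.card_le_card
            intro a ha
            rw [Finset.mem_inter] at ha ⊢
            exact ⟨hN'sub v ha.2, ha.1⟩
        _ = cost A := rfl
    calc ((A ∪ Finset.univ.biUnion F).card : ℝ)
        ≤ (cost A : ℝ) := by exact_mod_cast hcard1
      _ ≤ n * (p + S) := hA
end

section
/- Let k be an odd integer with k ≥ 5. Suppose G=(V,E) is a finite simple graph consisting only of isolated edges (i.e. a perfect matching on its vertex set). Then for any colouring g:V→ℕ there exists a colouring f:E→{0,…,k−1} such that (1) no vertex v∈V has partial sum s_{(f,g)}(v) congruent to 0 or 1 modulo k, and (2) for each i with 2 ≤ i ≤ k−1, the number of vertices v∈V with s_{(f,g)}(v) ≡ i (mod k) is at most |V|/(k−3) + k + 1. -/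
open Finset SimpleGraph

/-- The partial sum of a vertex `v`: `g(v)` plus the sum of the colours of the edges
incident with `v`. -/
def partialSum {V : Type*} [Fintype V] [DecidableEq V] (G : SimpleGraph V)
    [DecidableRel G.Adj] (f : Sym2 V → ℕ) (g : V → ℕ) (v : V) : ℕ :=
  g v + ∑ e ∈ G.incidenceFinset v, f e


section Aux

attribute [local instance] Classical.propDecidable

variable {k : ℕ}

/-- Forbidden classes for the lower endpoint `x` of a pair `{x, x+δ}`. -/
def isHole (δ x : ZMod k) : Prop := x = 0 ∨ x = 1 ∨ x + δ = 0 ∨ x + δ = 1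

/-- The near-layer weight function. -/
noncomputable def wfun (δ x : ZMod k) : ℕ :=
  if isHole δ x then 0
  else if h : ∃ j : ℕ, isHole δ (x - (j + 1) • δ) then
    (if Nat.find h % 2 = 0 then 2 else 0)
  else 1

lemma wfun_le_two (δ x : ZMod k) : wfun δ x ≤ 2 := by
  unfold wfun; split_ifs <;> omega

lemma not_isHole_of_wfun_ne_zero {δ x : ZMod k} (h : wfun δ x ≠ 0) : ¬ isHole δ x := by
  intro hh; unfold wfun at h; simp [hh] at h

lemma shift_eq (δ x : ZMod k) (j : ℕ) : (x - δ) - (j + 1) • δ = x - (j + 2) • δ := by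
  have h : (j + 2) • δ = (j + 1) • δ + δ := succ_nsmul δ (j + 1)
  rw [h]; abel

lemma wfun_eq_of_hole {δ x : ZMod k} (h : isHole δ x) : wfun δ x = 0 := by
  unfold wfun; rw [if_pos h]

lemma wfun_eq_of_find {δ x : ZMod k} (h1 : ¬ isHole δ x)
    (hr : ∃ j : ℕ, isHole δ (x - (j + 1) • δ)) :
    wfun δ x = if Nat.find hr % 2 = 0 then 2 else 0 := by
  unfold wfun; rw [if_neg h1, dif_pos hr]

lemma wfun_eq_of_unreached {δ x : ZMod k} (h1 : ¬ isHole δ x)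
    (hr : ¬ ∃ j : ℕ, isHole δ (x - (j + 1) • δ)) :
    wfun δ x = 1 := by
  unfold wfun; rw [if_neg h1, dif_neg hr]

lemma wfun_load (δ x : ZMod k) : wfun δ x + wfun δ (x - δ) ≤ 2 := by
  by_cases h1 : isHole δ x
  · rw [wfun_eq_of_hole h1]; simpa using wfun_le_two δ (x - δ)
  by_cases h2 : isHole δ (x - δ)
  · rw [wfun_eq_of_hole h2]; simpa using wfun_le_two δ x
  by_cases hr : ∃ j : ℕ, isHole δ (x - (j + 1) • δ)
  · have hrspec : isHole δ (x - (Nat.find hr + 1) • δ) := Nat.find_spec hr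
    have hr1 : Nat.find hr ≠ 0 := by
      intro h0
      apply h2
      rw [h0] at hrspec
      simpa using hrspec
    have hr2 : ∃ j : ℕ, isHole δ ((x - δ) - (j + 1) • δ) := by
      refine ⟨Nat.find hr - 1, ?_⟩
      rw [shift_eq]
      have h : Nat.find hr - 1 + 2 = Nat.find hr + 1 := by omega
      rw [h]; exact hrspec
    have hfind2 : Nat.find hr2 = Nat.find hr - 1 := by
      rw [Nat.find_eq_iff]
      constructor
      · rw [shift_eq]
        have h : Nat.find hr - 1 + 2 = Nat.find hr + 1 := by omega
        rw [h]; exact hrspec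
      · intro j hj hcon
        rw [shift_eq] at hcon
        have h : j + 2 = (j + 1) + 1 := by omega
        rw [h] at hcon
        exact Nat.find_min hr (show j + 1 < Nat.find hr by omega) hcon
    rw [wfun_eq_of_find h1 hr, wfun_eq_of_find h2 hr2, hfind2]
    by_cases hp : Nat.find hr % 2 = 0
    · have hp2 : ¬ ((Nat.find hr - 1) % 2 = 0) := by omega
      rw [if_pos hp, if_neg hp2]
    · have hp2 : (Nat.find hr - 1) % 2 = 0 := by omega
      rw [if_neg hp, if_pos hp2]
  · have hr2 : ¬ ∃ j : ℕ, isHole δ ((x - δ) - (j + 1) • δ) := by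
      intro hcon
      obtain ⟨j, hj⟩ := hcon
      apply hr
      refine ⟨j + 1, ?_⟩
      rw [shift_eq] at hj
      have h : j + 1 + 1 = j + 2 := by omega
      rw [h]; exact hj
    rw [wfun_eq_of_unreached h1 hr, wfun_eq_of_unreached h2 hr2]


lemma wfun_sub_eq_two {δ x : ZMod k} (hnh : ¬ isHole δ x) (hw : wfun δ x = 0) :
    wfun δ (x - δ) = 2 := by
  by_cases hr : ∃ j : ℕ, isHole δ (x - (j + 1) • δ)
  · have heq := wfun_eq_of_find hnh hr
    rw [hw] at heq
    have hpar : ¬ (Nat.find hr % 2 = 0) := by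
      intro hp; rw [if_pos hp] at heq; omega
    have h2 : ¬ isHole δ (x - δ) := by
      intro hh
      have h0 : Nat.find hr = 0 := by
        rw [Nat.find_eq_zero]
        have : x - (0 + 1) • δ = x - δ := by
          norm_num
        rw [this]; exact hh
      rw [h0] at hpar; omega
    have hr2 : ∃ j : ℕ, isHole δ ((x - δ) - (j + 1) • δ) := by
      refine ⟨Nat.find hr - 1, ?_⟩
      rw [shift_eq]
      have h : Nat.find hr - 1 + 2 = Nat.find hr + 1 := by omega
      rw [h]; exact Nat.find_spec hr
    have hfind2 : Nat.find hr2 = Nat.find hr - 1 := by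
      rw [Nat.find_eq_iff]
      constructor
      · rw [shift_eq]
        have h : Nat.find hr - 1 + 2 = Nat.find hr + 1 := by omega
        rw [h]; exact Nat.find_spec hr
      · intro j hj hcon
        rw [shift_eq] at hcon
        have h : j + 2 = (j + 1) + 1 := by omega
        rw [h] at hcon
        exact Nat.find_min hr (show j + 1 < Nat.find hr by omega) hcon
    rw [wfun_eq_of_find h2 hr2, hfind2, if_pos (by omega)]
  · rw [wfun_eq_of_unreached hnh hr] at hw; omega

lemma not_isHole_sub {δ x : ZMod k} (hnh : ¬ isHole δ x) (hw : wfun δ x = 0) :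
    ¬ isHole δ (x - δ) := by
  have := wfun_sub_eq_two hnh hw
  intro hh
  rw [wfun_eq_of_hole hh] at this
  omega

lemma neg_nsmul_rep {δ : ZMod k} (m : ℕ) (hm : m ≤ addOrderOf δ) :
    (addOrderOf δ - m) • δ = -(m • δ) := by
  have h : (addOrderOf δ - m) • δ + m • δ = addOrderOf δ • δ := by
    rw [← add_nsmul, Nat.sub_add_cancel hm]
  rw [addOrderOf_nsmul_eq_zero] at h
  exact eq_neg_of_add_eq_zero_left h

lemma wfun_mass [NeZero k] (hk : 5 ≤ k) (hodd : Odd k) (δ : ZMod k) :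
    k - 3 ≤ ∑ x : ZMod k, wfun δ x := by
  classical
  set Hs := univ.filter (fun x : ZMod k => isHole δ x) with hHs
  set T := univ.filter (fun x : ZMod k => wfun δ x = 2) with hT
  set O := univ.filter (fun x : ZMod k => wfun δ x = 1) with hO
  set Z := univ.filter (fun x : ZMod k => ¬ isHole δ x ∧ wfun δ x = 0) with hZ
  have hmass : ∑ x : ZMod k, wfun δ x = 2 * T.card + O.card := by
    have hval : ∀ x : ZMod k, wfun δ x =
        2 * (if wfun δ x = 2 then 1 else 0) + (if wfun δ x = 1 then 1 else 0) := by
      intro x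
      have h2 := wfun_le_two δ x
      have h3 : wfun δ x = 0 ∨ wfun δ x = 1 ∨ wfun δ x = 2 := by omega
      rcases h3 with h | h | h <;> rw [h] <;> norm_num
    rw [Finset.sum_congr rfl (fun x _ => hval x), Finset.sum_add_distrib, ← Finset.mul_sum,
      hT, hO, Finset.card_filter, Finset.card_filter]
  have hpart : Hs.card + T.card + O.card + Z.card = k := by
    have hone : ∀ x : ZMod k,
        ((if isHole δ x then 1 else 0) + (if wfun δ x = 2 then 1 else 0))
          + ((if wfun δ x = 1 then 1 else 0)
          + (if (¬ isHole δ x ∧ wfun δ x = 0) then 1 else 0)) = 1 := by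
      intro x
      by_cases hh : isHole δ x
      · have hw := wfun_eq_of_hole hh
        simp [hh, hw]
      · have h2 := wfun_le_two δ x
        have h3 : wfun δ x = 0 ∨ wfun δ x = 1 ∨ wfun δ x = 2 := by omega
        rcases h3 with h | h | h <;> simp [hh, h]
    have hsum : ∑ x : ZMod k, (((if isHole δ x then 1 else 0) + (if wfun δ x = 2 then 1 else 0))
          + ((if wfun δ x = 1 then 1 else 0)
          + (if (¬ isHole δ x ∧ wfun δ x = 0) then 1 else 0))) = k := by
      rw [Finset.sum_congr rfl (fun x _ => hone x)]
      simp [Finset.card_univ, ZMod.card]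
    rw [Finset.sum_add_distrib, Finset.sum_add_distrib, Finset.sum_add_distrib] at hsum
    rw [hHs, hT, hO, hZ, Finset.card_filter, Finset.card_filter, Finset.card_filter,
      Finset.card_filter]
    omega
  have hZT : Z.card ≤ T.card := by
    apply Finset.card_le_card_of_injOn (fun x => x - δ)
    · intro x hx
      rw [hZ, Finset.mem_coe, Finset.mem_filter] at hx
      rw [Finset.mem_coe, hT, Finset.mem_filter]
      exact ⟨Finset.mem_univ _, wfun_sub_eq_two hx.2.1 hx.2.2⟩
    · intro a _ b _ hab
      simpa using hab
  have hHsub : Hs ⊆ insert 0 (insert 1 (insert (-δ) ({1 - δ} : Finset (ZMod k)))) := by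
    intro x hx
    rw [hHs, Finset.mem_filter] at hx
    rcases hx.2 with h | h | h | h
    · simp [h]
    · simp [h]
    · have : x = -δ := eq_neg_of_add_eq_zero_left h
      simp [this]
    · have : x = 1 - δ := eq_sub_of_add_eq h
      simp [this]
  have hH4 : Hs.card ≤ 4 := by
    refine le_trans (Finset.card_le_card hHsub) ?_
    refine le_trans (Finset.card_insert_le _ _) ?_
    have h1 : (insert 1 (insert (-δ) ({1 - δ} : Finset (ZMod k)))).card ≤ 3 := by
      refine le_trans (Finset.card_insert_le _ _) ?_
      have h2 : (insert (-δ) ({1 - δ} : Finset (ZMod k))).card ≤ 2 := by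
        refine le_trans (Finset.card_insert_le _ _) ?_
        simp
      omega
    omega
  by_cases hH3 : Hs.card ≤ 3
  · omega
  · have hH4' : Hs.card = 4 := by omega
    have hδ0 : δ ≠ 0 := by
      intro h
      have hsub2 : Hs ⊆ insert 0 ({1} : Finset (ZMod k)) := by
        intro x hx
        rw [hHs, Finset.mem_filter] at hx
        rcases hx.2 with h' | h' | h' | h' <;> rw [h] at * <;> simp_all
      have := Finset.card_le_card hsub2
      have h2 : (insert 0 ({1} : Finset (ZMod k))).card ≤ 2 := by
        refine le_trans (Finset.card_insert_le _ _) ?_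
        simp
      omega
    by_cases hOe : O = ∅
    · -- parity case
      have hO0 : O.card = 0 := by rw [hOe]; simp
      obtain ⟨c, hc⟩ := hodd
      omega
    · -- extra element case
      obtain ⟨x₀, hx₀⟩ := Finset.nonempty_of_ne_empty hOe
      rw [hO, Finset.mem_filter] at hx₀
      have hx₀w : wfun δ x₀ = 1 := hx₀.2
      have hx₀nh : ¬ isHole δ x₀ := by
        intro hh; rw [wfun_eq_of_hole hh] at hx₀w; omega
      have hx₀nr : ¬ ∃ j : ℕ, isHole δ (x₀ - (j + 1) • δ) := by
        intro hr
        rw [wfun_eq_of_find hx₀nh hr] at hx₀w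
        split_ifs at hx₀w <;> omega
      have key1 : ∀ n : ℕ, n • δ ≠ 1 := by
        intro n hn
        apply hx₀nr
        have hx0ne : x₀ ≠ 0 := fun h => hx₀nh (Or.inl h)
        have hrepr : x₀ = (x₀.val * n) • δ := by
          have hrepr' : (x₀.val) • (n • δ) = x₀ := by
            rw [hn, nsmul_eq_mul, mul_one]
            exact ZMod.natCast_rightInverse x₀
          rw [smul_smul] at hrepr'
          exact hrepr'.symm
        have hm1 : x₀.val * n ≠ 0 := by
          intro h0
          rw [h0, zero_nsmul] at hrepr
          exact hx0ne hrepr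
        refine ⟨x₀.val * n - 1, ?_⟩
        have h : x₀.val * n - 1 + 1 = x₀.val * n := by omega
        rw [h, ← hrepr]
        exact Or.inl (sub_self x₀)
      set ℓ := addOrderOf δ with hℓ
      have hℓpos : 0 < ℓ := addOrderOf_pos δ
      have hℓdvd : ℓ ∣ k := by
        have := addOrderOf_dvd_card (x := δ)
        rwa [ZMod.card] at this
      have hℓodd : Odd ℓ := by
        rcases Nat.even_or_odd ℓ with he | ho
        · exfalso
          have h2 : (2 : ℕ) ∣ ℓ := he.two_dvd
          have h2k : (2 : ℕ) ∣ k := h2.trans hℓdvd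
          obtain ⟨c, hc⟩ := hodd
          obtain ⟨c2, hc2⟩ := h2k
          omega
        · exact ho
      have hℓ1 : ℓ ≠ 1 := by
        intro h
        exact hδ0 (AddMonoid.addOrderOf_eq_one_iff.mp h)
      have hℓ3 : 3 ≤ ℓ := by
        obtain ⟨c, hc⟩ := hℓodd
        omega
      have horder : ∀ m : ℕ, m • δ = 0 → ℓ ∣ m := by
        intro m hm
        exact addOrderOf_dvd_of_nsmul_eq_zero hm
      have hl0 : ℓ • δ = 0 := addOrderOf_nsmul_eq_zero δ
      set felem := -((2 : ℕ) • δ) with hfelem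
      have hneg2 : felem + δ = -δ := by
        rw [hfelem, two_nsmul]; abel
      have hfnh : ¬ isHole δ felem := by
        rintro (h | h | h | h)
        · rw [hfelem, neg_eq_zero] at h
          have := horder 2 h
          have := Nat.le_of_dvd (by norm_num) this
          omega
        · have := neg_nsmul_rep (δ := δ) 2 (by omega)
          rw [← hℓ] at this
          rw [hfelem] at h
          rw [h] at this
          exact key1 _ this
        · rw [hneg2, neg_eq_zero] at h
          exact hδ0 h
        · rw [hneg2] at h
          have := neg_nsmul_rep (δ := δ) 1 (by omega)
          rw [← hℓ, one_nsmul] at this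
          rw [h] at this
          exact key1 _ this
      have hkey : ∀ j : ℕ, felem - (j + 1) • δ = -((j + 3) • δ) := by
        intro j
        have h : (j + 3) • δ = (2 : ℕ) • δ + (j + 1) • δ := by
          rw [← add_nsmul]
          congr 1
          omega
        rw [h, neg_add, hfelem]
        abel
      have hreach : ∃ j : ℕ, isHole δ (felem - (j + 1) • δ) := by
        refine ⟨ℓ - 3, ?_⟩
        rw [hkey]
        have h : ℓ - 3 + 3 = ℓ := by omega
        rw [h, hl0, neg_zero]
        exact Or.inl rfl
      have hfind : Nat.find hreach = ℓ - 3 := by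
        rw [Nat.find_eq_iff]
        constructor
        · rw [hkey]
          have h : ℓ - 3 + 3 = ℓ := by omega
          rw [h, hl0, neg_zero]
          exact Or.inl rfl
        · intro j hj hcon
          rw [hkey] at hcon
          have hsucc : ∀ m : ℕ, -((m + 1) • δ) + δ = -(m • δ) := by
            intro m
            rw [succ_nsmul]
            abel
          rcases hcon with h | h | h | h
          · rw [neg_eq_zero] at h
            have := Nat.le_of_dvd (by omega) (horder _ h)
            omega
          · have h2 := neg_nsmul_rep (δ := δ) (j + 3) (by omega)
            rw [← hℓ] at h2
            rw [h] at h2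
            exact key1 _ h2
          · have h3 : j + 3 = (j + 2) + 1 := by omega
            rw [h3, hsucc] at h
            rw [neg_eq_zero] at h
            have := Nat.le_of_dvd (by omega) (horder _ h)
            omega
          · have h3 : j + 3 = (j + 2) + 1 := by omega
            rw [h3, hsucc] at h
            have h2 := neg_nsmul_rep (δ := δ) (j + 2) (by omega)
            rw [← hℓ] at h2
            rw [h] at h2
            exact key1 _ h2
      have hfT : felem ∈ T := by
        rw [hT, Finset.mem_filter]
        refine ⟨Finset.mem_univ _, ?_⟩
        rw [wfun_eq_of_find hfnh hreach, hfind, if_pos ?_]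
        obtain ⟨c, hc⟩ := hℓodd
        omega
      have hZT' : Z.card ≤ T.card - 1 := by
        have hinj : Z.card ≤ (T.erase felem).card := by
          apply Finset.card_le_card_of_injOn (fun x => x - δ)
          · intro x hx
            rw [hZ, Finset.mem_coe, Finset.mem_filter] at hx
            rw [Finset.mem_coe, Finset.mem_erase]; beta_reduce
            constructor
            · intro heq
              have hxval : x = -δ := by
                have : x = felem + δ := by rw [← heq]; abel
                rw [hneg2] at this
                exact this
              apply hx.2.1
              rw [hxval]
              exact Or.inr (Or.inr (Or.inl (by abel)))
            · rw [hT, Finset.mem_filter]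
              exact ⟨Finset.mem_univ _, wfun_sub_eq_two hx.2.1 hx.2.2⟩
          · intro a _ b _ hab
            simpa using hab
        rw [Finset.card_erase_of_mem hfT] at hinj
        exact hinj
      have hT1 : 1 ≤ T.card := Finset.card_pos.mpr ⟨felem, hfT⟩
      omega



noncomputable def wlist [NeZero k] (δ : ZMod k) : List (ZMod k) :=
  (Finset.univ.val.bind (fun x : ZMod k => Multiset.replicate (wfun δ x) x)).toList

lemma wlist_length [NeZero k] (δ : ZMod k) :
    (wlist δ).length = ∑ x : ZMod k, wfun δ x := by
  rw [wlist, Multiset.length_toList, Multiset.card_bind]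
  have h : (Multiset.map (Multiset.card ∘ fun x : ZMod k => Multiset.replicate (wfun δ x) x)
      Finset.univ.val).sum
      = Finset.univ.sum (fun x : ZMod k => (Multiset.replicate (wfun δ x) x).card) := rfl
  rw [h]
  apply Finset.sum_congr rfl
  intro x _
  exact Multiset.card_replicate _ _

lemma wlist_count [NeZero k] (δ : ZMod k) (c : ZMod k) :
    (wlist δ).count c = wfun δ c := by
  have h1 : ∀ (M : Multiset (ZMod k)), M.toList.count c = Multiset.count c M := by
    intro M
    rw [← Multiset.coe_count, Multiset.coe_toList]
  rw [wlist, h1, Multiset.count_bind]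
  have h2 : ∀ x : ZMod k, Multiset.count c (Multiset.replicate (wfun δ x) x)
      = if x = c then wfun δ x else 0 := by
    intro x
    rw [Multiset.count_replicate]
  have h3 : (Multiset.map (fun x => Multiset.count c (Multiset.replicate (wfun δ x) x))
      Finset.univ.val).sum = Finset.univ.sum
        (fun x => Multiset.count c (Multiset.replicate (wfun δ x) x)) := rfl
  rw [h3, Finset.sum_congr rfl (fun x _ => h2 x),
    Finset.sum_ite_eq' Finset.univ c (fun x => wfun δ x), if_pos (Finset.mem_univ c)]

lemma wlist_mem_ne_zero [NeZero k] (δ : ZMod k) {c : ZMod k} (hc : c ∈ wlist δ) :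
    wfun δ c ≠ 0 := by
  have := List.count_pos_iff.mpr hc
  rw [wlist_count] at this
  omega

lemma mod_fiber_card (m p t : ℕ) :
    ((Finset.range m).filter (fun j => j % p = t)).card ≤ m / p + 1 := by
  have h : ((Finset.range m).filter (fun j => j % p = t)).card
      ≤ (Finset.range (m / p + 1)).card := by
    apply Finset.card_le_card_of_injOn (fun j => j / p)
    · intro j hj
      rw [Finset.mem_coe, Finset.mem_filter, Finset.mem_range] at hj
      rw [Finset.mem_coe, Finset.mem_range]; beta_reduce
      have := Nat.div_le_div_right (le_of_lt hj.1) (c := p)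
      omega
    · intro a ha b hb hab
      simp only [Finset.mem_coe, Finset.mem_filter, Finset.mem_range] at ha hb
      simp only at hab
      have h1 := Nat.div_add_mod a p
      have h2 := Nat.div_add_mod b p
      have h3 : a % p = t := ha.2
      have h4 : b % p = t := hb.2
      have h5 : p * (a / p) = p * (b / p) := by rw [hab]
      omega
  simpa using h

lemma count_get_sum {α : Type*} [DecidableEq α] (L : List α) (c : α) :
    ∑ t : Fin L.length, (if L.get t = c then 1 else 0) = L.count c := by
  induction L with
  | nil => simp
  | cons a tl ih =>
    have h : ∑ t : Fin (a :: tl).length, (if (a :: tl).get t = c then 1 else 0)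
        = (if a = c then 1 else 0)
          + ∑ t : Fin tl.length, (if tl.get t = c then 1 else 0) := by
      exact Fin.sum_univ_succ (fun t : Fin (tl.length + 1) => if (a :: tl).get t = c then 1 else 0)
    rw [h, ih, List.count_cons]
    rcases eq_or_ne a c with hac | hac
    · subst hac; simp; omega
    · have h2 : ¬ ((c == a) = true) := by
        simp only [beq_iff_eq]
        exact fun hh => hac hh.symm
      simp [hac, h2]

lemma sum_get_mod_le {α : Type*} [DecidableEq α] (L : List α) (hp : 0 < L.length) (m : ℕ)
    (c : α) :
    (∑ j ∈ Finset.range m, (if L.get ⟨j % L.length, Nat.mod_lt j hp⟩ = c then 1 else 0))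
      ≤ (m / L.length + 1) * L.count c := by
  classical
  set p := L.length with hpdef
  set F : ℕ → ℕ := fun j => if L.get ⟨j % p, Nat.mod_lt j hp⟩ = c then 1 else 0 with hF
  have hmaps : ∀ j ∈ Finset.range m, j % p ∈ Finset.range p :=
    fun j _ => Finset.mem_range.mpr (Nat.mod_lt j hp)
  have hfib := Finset.sum_fiberwise_of_maps_to hmaps F
  rw [← hfib]
  have hstep : ∀ t ∈ Finset.range p,
      (∑ j ∈ (Finset.range m).filter (fun j => j % p = t), F j) ≤ (m / p + 1) * F t := by
    intro t ht
    have htp : t % p = t := Nat.mod_eq_of_lt (Finset.mem_range.mp ht)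
    have hconst : ∀ j ∈ (Finset.range m).filter (fun j => j % p = t), F j = F t := by
      intro j hj
      have hjt : j % p = t := by
        have := (Finset.mem_filter.mp hj).2
        exact this
      have hfin : (⟨j % p, Nat.mod_lt j hp⟩ : Fin p) = ⟨t % p, Nat.mod_lt t hp⟩ := by
        apply Fin.ext
        simp [hjt, htp]
      rw [hF]
      simp only
      rw [hfin]
    rw [Finset.sum_congr rfl hconst, Finset.sum_const, smul_eq_mul]
    exact Nat.mul_le_mul_right (F t) (mod_fiber_card m p t)
  calc (∑ t ∈ Finset.range p, ∑ j ∈ (Finset.range m).filter (fun j => j % p = t), F j)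
      ≤ ∑ t ∈ Finset.range p, (m / p + 1) * F t := Finset.sum_le_sum hstep
    _ = (m / p + 1) * ∑ t ∈ Finset.range p, F t := by rw [Finset.mul_sum]
    _ = (m / p + 1) * L.count c := by
        congr 1
        rw [← count_get_sum L c, ← Fin.sum_univ_eq_sum_range F p]
        apply Finset.sum_congr rfl
        intro i _
        have hfin : (⟨(i : ℕ) % p, Nat.mod_lt (i : ℕ) hp⟩ : Fin p) = i := by
          apply Fin.ext
          simp [Nat.mod_eq_of_lt i.isLt]
        rw [hF]
        simp only
        rw [hfin]

lemma card_filter_pair {α : Type*} [DecidableEq α] (P : α → Prop) [DecidablePred P]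
    {a b : α} (hab : a ≠ b) :
    (({a, b} : Finset α).filter P).card = (if P a then 1 else 0) + (if P b then 1 else 0) := by
  rw [Finset.filter_insert, Finset.filter_singleton]
  by_cases ha : P a <;> by_cases hb : P b <;> simp [ha, hb, hab]

end Aux



/-- If `k ≥ 5` is odd and `G` consists only of isolated edges (every vertex has degree one),
then for any vertex colouring `g` there is an edge colouring `f` with colours `{0,…,k−1}` such
that no partial sum is `0` or `1` mod `k`, and at most `|V|/(k−3) + k + 1` partial sums lie in
any congruency class mod `k`. -/
theorem statement6 (k : ℕ) (hodd : Odd k) (hk : 5 ≤ k)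
    {V : Type*} [Fintype V] [DecidableEq V] (G : SimpleGraph V) [DecidableRel G.Adj]
    (hmatch : ∀ v : V, G.degree v = 1) (g : V → ℕ) :
    ∃ f : Sym2 V → ℕ,
      (∀ e ∈ G.edgeFinset, f e < k) ∧
      (∀ v : V, partialSum G f g v % k ≠ 0 ∧ partialSum G f g v % k ≠ 1) ∧
      ∀ i : ℕ, 2 ≤ i → i ≤ k - 1 →
        ((Finset.univ.filter (fun v => partialSum G f g v % k = i)).card : ℝ) ≤
          (Fintype.card V : ℝ) / ((k : ℝ) - 3) + k + 1 := by
  classical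
  haveI : NeZero k := ⟨by omega⟩
  set E := G.edgeFinset with hE
  -- orientation choice
  have horient : ∀ e : Sym2 V, ∃ p : V × V, e ∈ E →
      (G.Adj p.1 p.2 ∧ e = s(p.1, p.2) ∧
        ((g p.2 : ZMod k) - (g p.1 : ZMod k)).val ≤ (k - 1) / 2) := by
    intro e
    induction e with
    | _ u v =>
      by_cases he : s(u, v) ∈ E
      · have hadj : G.Adj u v := by
          rw [hE, SimpleGraph.mem_edgeFinset, SimpleGraph.mem_edgeSet] at he
          exact he
        by_cases hval : ((g v : ZMod k) - (g u : ZMod k)).val ≤ (k - 1) / 2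
        · exact ⟨(u, v), fun _ => ⟨hadj, rfl, hval⟩⟩
        · refine ⟨(v, u), fun _ => ⟨hadj.symm, Sym2.eq_swap, ?_⟩⟩
          set d := ((g v : ZMod k) - (g u : ZMod k)) with hd
          have hdne : d ≠ 0 := by
            intro h0; rw [h0] at hval; simp [ZMod.val_zero] at hval
          have hneg : ((g u : ZMod k) - (g v : ZMod k)) = -d := by rw [hd]; ring
          rw [hneg, ZMod.neg_val, if_neg hdne]
          have hlt : d.val < k := ZMod.val_lt d
          obtain ⟨c, hc⟩ := hodd
          omega
      · exact ⟨(u, u), fun h => absurd h he⟩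
  choose pfun hor using horient
  set ue : Sym2 V → V := fun e => (pfun e).1 with hue
  set ve : Sym2 V → V := fun e => (pfun e).2 with hve
  set fam : Sym2 V → ℕ := fun e => ((g (ve e) : ZMod k) - (g (ue e) : ZMod k)).val with hfam
  set famSet : ℕ → Finset (Sym2 V) := fun δn => E.filter (fun e => fam e = δn) with hfamSet
  set dl : ℕ → List (ZMod k) := fun δn => wlist ((δn : ZMod k)) with hdl
  have hmass : ∀ δn : ℕ, k - 3 ≤ (dl δn).length := by
    intro δn
    rw [hdl]
    simp only
    rw [wlist_length]
    exact wfun_mass hk hodd _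
  have hlen : ∀ δn : ℕ, 0 < (dl δn).length := by
    intro δn; have := hmass δn; omega
  set nidx : Sym2 V → ℕ := fun e =>
    if he : e ∈ E then
      (((famSet (fam e)).equivFin) ⟨e, Finset.mem_filter.mpr ⟨he, rfl⟩⟩ : Fin _).val
    else 0 with hnidx
  set ival : Sym2 V → ZMod k := fun e =>
    (dl (fam e)).get ⟨nidx e % (dl (fam e)).length, Nat.mod_lt _ (hlen _)⟩ with hival
  set f : Sym2 V → ℕ := fun e => (ival e - (g (ue e) : ZMod k)).val with hf
  -- basic facts
  have hnothole : ∀ e : Sym2 V, ¬ isHole ((fam e : ZMod k)) (ival e) := by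
    intro e
    apply not_isHole_of_wfun_ne_zero
    apply wlist_mem_ne_zero
    have hmem : ival e ∈ dl (fam e) := List.get_mem _ _
    exact hmem
  have huniq : ∀ (x : V) (e : Sym2 V), e ∈ E → x ∈ e → G.incidenceFinset x = {e} := by
    intro x e he hxe
    have hmem : e ∈ G.incidenceFinset x := by
      rw [SimpleGraph.mem_incidenceFinset]
      exact ⟨SimpleGraph.mem_edgeFinset.mp he, hxe⟩
    have hcard : (G.incidenceFinset x).card = 1 := by
      rw [G.card_incidenceFinset_eq_degree]
      exact hmatch x
    obtain ⟨a, ha⟩ := Finset.card_eq_one.mp hcard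
    rw [ha] at hmem ⊢
    rw [Finset.mem_singleton] at hmem
    rw [hmem]
  have hps : ∀ (x : V) (e : Sym2 V), e ∈ E → x ∈ e → partialSum G f g x = g x + f e := by
    intro x e he hxe
    rw [partialSum, huniq x e he hxe, Finset.sum_singleton]
  have hclsu : ∀ e ∈ E, partialSum G f g (ue e) % k = (ival e).val := by
    intro e he
    obtain ⟨hadj, heq, _⟩ := hor e he
    have hmem : ue e ∈ e := by
      have hm : (pfun e).1 ∈ s((pfun e).1, (pfun e).2) := Sym2.mem_mk_left _ _
      rw [← heq] at hm
      exact hm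
    rw [hps (ue e) e he hmem]
    have h1 : ((f e : ℕ) : ZMod k) = ival e - (g (ue e) : ZMod k) := by
      rw [hf]; exact ZMod.natCast_rightInverse _
    have h2 : ((g (ue e) + f e : ℕ) : ZMod k) = ival e := by
      push_cast
      rw [h1]; ring
    rw [← ZMod.val_natCast, h2]
  have hclsv : ∀ e ∈ E, partialSum G f g (ve e) % k
      = (ival e + ((fam e : ℕ) : ZMod k)).val := by
    intro e he
    obtain ⟨hadj, heq, _⟩ := hor e he
    have hmem : ve e ∈ e := by
      have hm : (pfun e).2 ∈ s((pfun e).1, (pfun e).2) := Sym2.mem_mk_right _ _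
      rw [← heq] at hm
      exact hm
    rw [hps (ve e) e he hmem]
    have h1 : ((f e : ℕ) : ZMod k) = ival e - (g (ue e) : ZMod k) := by
      rw [hf]; exact ZMod.natCast_rightInverse _
    have h3 : ((fam e : ℕ) : ZMod k) = (g (ve e) : ZMod k) - (g (ue e) : ZMod k) := by
      rw [hfam]; exact ZMod.natCast_rightInverse _
    have h2 : ((g (ve e) + f e : ℕ) : ZMod k) = ival e + ((fam e : ℕ) : ZMod k) := by
      push_cast
      rw [h1, h3]; ring
    rw [← ZMod.val_natCast, h2]
  have hedge : ∀ x : V, ∃ e ∈ E, x ∈ e := by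
    intro x
    have hne : (G.incidenceFinset x).Nonempty := by
      rw [← Finset.card_pos, G.card_incidenceFinset_eq_degree, hmatch x]
      norm_num
    obtain ⟨e, he⟩ := hne
    rw [SimpleGraph.mem_incidenceFinset] at he
    exact ⟨e, SimpleGraph.mem_edgeFinset.mpr he.1, he.2⟩
  have hvert : ∀ x : V, ∃ e ∈ E, x ∈ e ∧ (x = ue e ∨ x = ve e) := by
    intro x
    obtain ⟨e, he, hxe⟩ := hedge x
    obtain ⟨hadj, heq, _⟩ := hor e he
    refine ⟨e, he, hxe, ?_⟩
    rw [heq, Sym2.mem_iff] at hxe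
    exact hxe
  have hval1 : ∀ x : ZMod k, x.val = 1 → x = 1 := by
    intro x hx
    have h := ZMod.natCast_rightInverse (n := k) x
    rw [hx, Nat.cast_one] at h
    exact h.symm
  have cond2 : ∀ v : V, partialSum G f g v % k ≠ 0 ∧ partialSum G f g v % k ≠ 1 := by
    intro v
    obtain ⟨e, he, hxe, hcase⟩ := hvert v
    have hnh := hnothole e
    rcases hcase with h | h
    · rw [h, hclsu e he]
      constructor
      · intro h0
        exact hnh (Or.inl ((ZMod.val_eq_zero _).mp h0))
      · intro h1
        exact hnh (Or.inr (Or.inl (hval1 _ h1)))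
    · rw [h, hclsv e he]
      constructor
      · intro h0
        exact hnh (Or.inr (Or.inr (Or.inl ((ZMod.val_eq_zero _).mp h0))))
      · intro h1
        exact hnh (Or.inr (Or.inr (Or.inr (hval1 _ h1))))
  refine ⟨f, ?_, cond2, ?_⟩
  · intro e _
    rw [hf]
    exact ZMod.val_lt _
  intro i hi2 hik
  have hik' : i < k := by omega
  set K : ℕ := (k - 1) / 2 + 1 with hK
  set P : V → Prop := fun v => partialSum G f g v % k = i with hP
  -- membership in pairs implies membership in the edge
  have hmemE : ∀ e ∈ E, ∀ a : V, a ∈ ({ue e, ve e} : Finset V) → a ∈ e := by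
    intro e he a ha
    obtain ⟨hadj, heq, _⟩ := hor e he
    rw [Finset.mem_insert, Finset.mem_singleton] at ha
    have hm : a ∈ s((pfun e).1, (pfun e).2) := by
      rw [Sym2.mem_iff]; exact ha
    rwa [← heq] at hm
  have hcover : (Finset.univ : Finset V) = E.biUnion (fun e => ({ue e, ve e} : Finset V)) := by
    apply Finset.ext
    intro x
    simp only [Finset.mem_univ, true_iff, Finset.mem_biUnion]
    obtain ⟨e, he, hxe, hcase⟩ := hvert x
    refine ⟨e, he, ?_⟩
    rcases hcase with h | h
    · rw [h]; exact Finset.mem_insert_self _ _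
    · rw [h]; exact Finset.mem_insert_of_mem (Finset.mem_singleton_self _)
  have hdisj : ∀ e1 ∈ E, ∀ e2 ∈ E, e1 ≠ e2 →
      Disjoint (({ue e1, ve e1} : Finset V).filter P) (({ue e2, ve e2} : Finset V).filter P) := by
    intro e1 he1 e2 he2 hne
    rw [Finset.disjoint_left]
    intro a ha1 ha2
    have hm1 : a ∈ e1 := hmemE e1 he1 a (Finset.mem_of_mem_filter a ha1)
    have hm2 : a ∈ e2 := hmemE e2 he2 a (Finset.mem_of_mem_filter a ha2)
    have h1 := huniq a e1 he1 hm1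
    have h2 := huniq a e2 he2 hm2
    rw [h1] at h2
    apply hne
    have := Finset.singleton_injective h2
    exact this
  have hsplit : ((Finset.univ : Finset V).filter P).card
      = ∑ e ∈ E, ((if P (ue e) then 1 else 0) + (if P (ve e) then 1 else 0)) := by
    rw [hcover, Finset.filter_biUnion, Finset.card_biUnion hdisj]
    apply Finset.sum_congr rfl
    intro e he
    have hne : ue e ≠ ve e := (hor e he).1.ne
    exact card_filter_pair P hne
  have hfammem : ∀ e ∈ E, fam e ∈ Finset.range K := by
    intro e he
    rw [Finset.mem_range, hK]
    have h2 : fam e ≤ (k - 1) / 2 := (hor e he).2.2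
    omega
  have hregroup : ∑ e ∈ E, ((if P (ue e) then 1 else 0) + (if P (ve e) then 1 else 0))
      = ∑ δn ∈ Finset.range K, ∑ e ∈ famSet δn,
          ((if P (ue e) then 1 else 0) + (if P (ve e) then 1 else 0)) := by
    rw [Finset.sum_fiberwise_of_maps_to hfammem]
  -- the per-family bound
  have hperfam : ∀ δn ∈ Finset.range K,
      (∑ e ∈ famSet δn, ((if P (ue e) then 1 else 0) + (if P (ve e) then 1 else 0)))
        ≤ 2 * ((famSet δn).card / (k - 3)) + 2 := by
    intro δn _
    set c₀ : ZMod k := ((i : ℕ) : ZMod k) with hc₀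
    set dd : ZMod k := ((δn : ℕ) : ZMod k) with hdd
    have hvaltoiv : ∀ (x : ZMod k), x.val = i ↔ x = c₀ := by
      intro x
      constructor
      · intro h
        have h2 := ZMod.natCast_rightInverse (n := k) x
        rw [h] at h2
        rw [← h2, hc₀]
      · intro h
        rw [h, hc₀, ZMod.val_natCast, Nat.mod_eq_of_lt hik']
    have hT : ∀ e ∈ famSet δn, ((if P (ue e) then 1 else 0) + (if P (ve e) then 1 else 0))
        = ((if ival e = c₀ then 1 else 0) + (if ival e = c₀ - dd then 1 else 0)) := by
      intro e hein
      have heE : e ∈ E := (Finset.mem_filter.mp hein).1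
      have hfameq : fam e = δn := (Finset.mem_filter.mp hein).2
      have hu : P (ue e) ↔ ival e = c₀ := by
        rw [hP]
        simp only
        rw [hclsu e heE]
        exact hvaltoiv _
      have hv : P (ve e) ↔ ival e = c₀ - dd := by
        rw [hP]
        simp only
        rw [hclsv e heE]
        rw [hvaltoiv _]
        rw [hfameq, ← hdd]
        exact eq_sub_iff_add_eq.symm
      rw [if_congr hu rfl rfl, if_congr hv rfl rfl]
    rw [Finset.sum_congr rfl hT, Finset.sum_add_distrib]
    set p : ℕ := (dl δn).length with hps2
    set mδ : ℕ := (famSet δn).card with hmδ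
    have hpart : ∀ c : ZMod k, (∑ e ∈ famSet δn, (if ival e = c then 1 else 0))
        ≤ (mδ / p + 1) * (dl δn).count c := by
      intro c
      have hival' : ∀ (x : {e // e ∈ famSet δn}), ival x.1
          = (dl δn).get ⟨((((famSet δn).equivFin) x) : Fin mδ).val % p,
              Nat.mod_lt _ (hlen δn)⟩ := by
        intro x
        obtain ⟨e, hein⟩ := x
        have heE : e ∈ E := (Finset.mem_filter.mp hein).1
        have hfameq : fam e = δn := (Finset.mem_filter.mp hein).2
        subst hfameq
        have hnidxval : nidx e
            = ((((famSet (fam e)).equivFin) ⟨e, Finset.mem_filter.mpr ⟨heE, rfl⟩⟩ : Fin _)).val :=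
          dif_pos heE
        show (dl (fam e)).get ⟨nidx e % (dl (fam e)).length, Nat.mod_lt _ (hlen _)⟩
            = (dl (fam e)).get
                ⟨(((famSet (fam e)).equivFin) ⟨e, hein⟩ : Fin ((famSet (fam e)).card)).val
                    % (dl (fam e)).length, Nat.mod_lt _ (hlen _)⟩
        apply congrArg
        apply Fin.ext
        simp only
        rw [hnidxval]
      calc ∑ e ∈ famSet δn, (if ival e = c then 1 else 0)
          = ∑ x : {e // e ∈ famSet δn}, (if ival x.1 = c then 1 else 0) :=
            (Finset.sum_coe_sort (famSet δn) (fun e => if ival e = c then 1 else 0)).symm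
        _ = ∑ t : Fin mδ, (if (dl δn).get ⟨t.val % p, Nat.mod_lt _ (hlen δn)⟩ = c
              then 1 else 0) := by
            rw [← Equiv.sum_comp ((famSet δn).equivFin)
              (fun t : Fin mδ => if (dl δn).get ⟨t.val % p, Nat.mod_lt _ (hlen δn)⟩ = c
                then 1 else 0)]
            apply Finset.sum_congr rfl
            intro x _
            rw [hival' x]
        _ = ∑ j ∈ Finset.range mδ, (if (dl δn).get ⟨j % p, Nat.mod_lt _ (hlen δn)⟩ = c
              then 1 else 0) := by
            exact Fin.sum_univ_eq_sum_range
              (fun j => if (dl δn).get ⟨j % p, Nat.mod_lt _ (hlen δn)⟩ = c then 1 else 0) mδ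
        _ ≤ (mδ / p + 1) * (dl δn).count c := sum_get_mod_le _ (hlen δn) mδ c
    have h1 := hpart c₀
    have h2 := hpart (c₀ - dd)
    have hcount : ∀ c : ZMod k, (dl δn).count c = wfun dd c := by
      intro c
      rw [hdl]
      simp only
      rw [wlist_count]
    rw [hcount] at h1
    rw [hcount] at h2
    have hload : wfun dd c₀ + wfun dd (c₀ - dd) ≤ 2 := wfun_load dd c₀
    have hple : mδ / p ≤ mδ / (k - 3) := Nat.div_le_div_left (hmass δn) (by omega)
    calc (∑ e ∈ famSet δn, (if ival e = c₀ then 1 else 0))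
          + (∑ e ∈ famSet δn, (if ival e = c₀ - dd then 1 else 0))
        ≤ (mδ / p + 1) * wfun dd c₀ + (mδ / p + 1) * wfun dd (c₀ - dd) :=
          Nat.add_le_add h1 h2
      _ = (mδ / p + 1) * (wfun dd c₀ + wfun dd (c₀ - dd)) := by ring
      _ ≤ (mδ / p + 1) * 2 := Nat.mul_le_mul_left _ hload
      _ = 2 * (mδ / p) + 2 := by ring
      _ ≤ 2 * (mδ / (k - 3)) + 2 := by omega
  -- put everything together over ℝ
  have htotal : ((Finset.univ : Finset V).filter P).card
      ≤ ∑ δn ∈ Finset.range K, (2 * ((famSet δn).card / (k - 3)) + 2) := by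
    rw [hsplit, hregroup]
    exact Finset.sum_le_sum hperfam
  have hcardsum : ∑ δn ∈ Finset.range K, (famSet δn).card = E.card :=
    (Finset.card_eq_sum_card_fiberwise hfammem).symm
  have hn : Fintype.card V = 2 * E.card := by
    have hsum := G.sum_degrees_eq_twice_card_edges
    rw [Finset.sum_congr rfl (fun v _ => hmatch v), Finset.sum_const, smul_eq_mul,
      mul_one, Finset.card_univ] at hsum
    exact hsum
  have hk3 : ((k - 3 : ℕ) : ℝ) = (k : ℝ) - 3 := by
    rw [Nat.cast_sub (by omega)]
    norm_num
  have hk3pos : (0 : ℝ) < (k : ℝ) - 3 := by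
    have : (5 : ℝ) ≤ (k : ℝ) := by exact_mod_cast hk
    linarith
  have h2K : (2 * K : ℕ) = k + 1 := by
    obtain ⟨c, hc⟩ := hodd
    rw [hK]
    omega
  calc (((Finset.univ : Finset V).filter P).card : ℝ)
      ≤ ((∑ δn ∈ Finset.range K, (2 * ((famSet δn).card / (k - 3)) + 2) : ℕ) : ℝ) := by
        exact_mod_cast htotal
    _ = ∑ δn ∈ Finset.range K, ((2 : ℝ) * ((((famSet δn).card / (k - 3) : ℕ)) : ℝ) + 2) := by
        push_cast
        rfl
    _ ≤ ∑ δn ∈ Finset.range K, ((2 : ℝ) * (((famSet δn).card : ℝ) / ((k : ℝ) - 3)) + 2) := by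
        apply Finset.sum_le_sum
        intro δn _
        have hdiv : ((((famSet δn).card / (k - 3) : ℕ)) : ℝ)
            ≤ ((famSet δn).card : ℝ) / (((k - 3 : ℕ)) : ℝ) := Nat.cast_div_le
        rw [hk3] at hdiv
        have := mul_le_mul_of_nonneg_left hdiv (by norm_num : (0:ℝ) ≤ 2)
        linarith
    _ = (2 : ℝ) / ((k : ℝ) - 3) * (∑ δn ∈ Finset.range K, ((famSet δn).card : ℝ))
          + 2 * K := by
        rw [Finset.sum_add_distrib, Finset.mul_sum, Finset.sum_const, Finset.card_range,
          nsmul_eq_mul]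
        congr 1
        · apply Finset.sum_congr rfl
          intro δn _
          ring
        · ring
    _ = (Fintype.card V : ℝ) / ((k : ℝ) - 3) + ((k : ℝ) + 1) := by
        have hsumcast : (∑ δn ∈ Finset.range K, ((famSet δn).card : ℝ)) = (E.card : ℝ) := by
          exact_mod_cast congrArg (Nat.cast : ℕ → ℝ) hcardsum
        rw [hsumcast]
        have hncast : (Fintype.card V : ℝ) = 2 * (E.card : ℝ) := by
          exact_mod_cast hn
        have hKcast : (2 : ℝ) * (K : ℕ) = (k : ℝ) + 1 := by
          exact_mod_cast congrArg (Nat.cast : ℕ → ℝ) h2K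
        rw [hncast, hKcast]
        field_simp
    _ = (Fintype.card V : ℝ) / ((k : ℝ) - 3) + (k : ℝ) + 1 := by ring
end

section
/- Let S₁,…,S_k be vertex-disjoint stars with centres c₁,…,c_k, let L be a set of integers of size |⋃_{i=1}^k E(Sᵢ)|, and let g be a function from ⋃_{i=1}^k V(Sᵢ) to ℕ. Then there exists a bijective edge labelling f: ⋃_{i=1}^k E(Sᵢ) → L such that the sums s_{(f,g)}(cᵢ) = g(cᵢ) + Σ_{e∋cᵢ} f(e) are pairwise distinct over i = 1,…,k. -/
open Finset SimpleGraph

/-- The edge set of a disjoint collection of stars with centres `c i` and leaf sets `A i`. -/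
def starEdges {V : Type*} [DecidableEq V] (k : ℕ) (c : Fin k → V) (A : Fin k → Finset V) :
    Finset (Sym2 V) :=
  (Finset.univ : Finset (Fin k)).biUnion fun i => (A i).image fun v => s(c i, v)

lemma swap_lemma (X : Finset ℤ) (hX : X.Nonempty) (m : ℤ) (hm : m ∉ X)
    (hlt : X.min' hX < m) :
    ∃ X' : Finset ℤ, X' ⊆ insert m X ∧ X'.card = X.card ∧ ∑ x ∈ X, x < ∑ x ∈ X', x := by
  have hmin : X.min' hX ∈ X := X.min'_mem hX
  have hmne : m ∉ X.erase (X.min' hX) := fun h => hm (Finset.mem_of_mem_erase h)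
  refine ⟨insert m (X.erase (X.min' hX)), ?_, ?_, ?_⟩
  · exact Finset.insert_subset_insert m (Finset.erase_subset _ _)
  · rw [Finset.card_insert_of_notMem hmne, Finset.card_erase_of_mem hmin]
    have : 1 ≤ X.card := Finset.card_pos.mpr hX
    omega
  · rw [Finset.sum_insert hmne, Finset.sum_erase_eq_sub hmin]
    linarith

lemma exists_blocks {ι : Type*} [DecidableEq ι] (n : ι → ℕ) (g : ι → ℤ) :
    ∀ (m : ℕ) (s : Finset ι) (L : Finset ℤ), s.card = m → (∀ i ∈ s, 1 ≤ n i) →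
      L.card = ∑ i ∈ s, n i →
      ∃ B : ι → Finset ℤ,
        (∀ i ∈ s, B i ⊆ L) ∧ (∀ i ∈ s, (B i).card = n i) ∧
        (∀ i ∈ s, ∀ j ∈ s, i ≠ j → Disjoint (B i) (B j)) ∧
        (∀ i ∈ s, ∀ j ∈ s, i ≠ j → g i + ∑ x ∈ B i, x ≠ g j + ∑ x ∈ B j, x) := by
  intro m
  induction m with
  | zero =>
    intro s L hs _ _
    have : s = ∅ := Finset.card_eq_zero.mp hs
    subst this
    exact ⟨fun _ => ∅, by simp, by simp, by simp, by simp⟩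
  | succ m ih =>
    intro s L hs hn hL
    have hsne : s.Nonempty := Finset.card_pos.mp (by omega)
    -- candidate set of pairs (i, B)
    set C : Finset (ι × Finset ℤ) :=
      (s ×ˢ L.powerset).filter (fun p => p.2.card = n p.1) with hC
    have hCne : C.Nonempty := by
      obtain ⟨i0, hi0⟩ := hsne
      have hle : n i0 ≤ L.card := by
        rw [hL]; exact Finset.single_le_sum (fun i _ => Nat.zero_le _) hi0
      obtain ⟨T, hT, hTc⟩ := Finset.exists_subset_card_eq hle
      exact ⟨(i0, T), by simp [hC, hi0, hT, hTc]⟩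
    obtain ⟨⟨istar, Bstar⟩, hmem, hmax⟩ :=
      Finset.exists_max_image C (fun p => g p.1 + ∑ x ∈ p.2, x) hCne
    simp only [hC, Finset.mem_filter, Finset.mem_product, Finset.mem_powerset] at hmem
    obtain ⟨⟨his, hBL⟩, hBc⟩ := hmem
    have hmax' : ∀ j ∈ s, ∀ T ⊆ L, T.card = n j →
        g j + ∑ x ∈ T, x ≤ g istar + ∑ x ∈ Bstar, x := by
      intro j hj T hT hTc
      exact hmax (j, T) (by simp [hC, hj, hT, hTc])
    -- strict inequality for blocks inside L \ Bstar
    have key : ∀ j ∈ s, j ≠ istar → ∀ T ⊆ L \ Bstar, T.card = n j →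
        g j + ∑ x ∈ T, x < g istar + ∑ x ∈ Bstar, x := by
      intro j hj hji T hT hTc
      have hTL : T ⊆ L := hT.trans (Finset.sdiff_subset)
      have hle := hmax' j hj T hTL hTc
      rcases lt_or_eq_of_le hle with h | h
      · exact h
      exfalso
      have hBne : Bstar.Nonempty := Finset.card_pos.mp (by rw [hBc]; exact hn istar his)
      have hTne : T.Nonempty := Finset.card_pos.mp (by rw [hTc]; exact hn j hj)
      have hUne : (Bstar ∪ T).Nonempty := hBne.mono Finset.subset_union_left
      set M := (Bstar ∪ T).max' hUne with hM
      have hMmem := Finset.max'_mem _ hUne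
      have hTB : Disjoint T Bstar := by
        rw [Finset.disjoint_left]
        intro a ha haB
        exact (Finset.mem_sdiff.mp (hT ha)).2 haB
      rcases Finset.mem_union.mp hMmem with hMB | hMT
      · -- M ∈ Bstar, improve T
        have hMnT : M ∉ T := fun h => (Finset.disjoint_left.mp hTB h) hMB
        have hminT : T.min' hTne < M := by
          have h1 : T.min' hTne ≤ M :=
            Finset.le_max' _ _ (Finset.mem_union_right _ (T.min'_mem hTne))
          have h2 : T.min' hTne ≠ M := fun h => hMnT (h ▸ T.min'_mem hTne)
          exact lt_of_le_of_ne h1 h2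
        obtain ⟨T', hT'sub, hT'c, hT'sum⟩ := swap_lemma T hTne M hMnT hminT
        have hT'L : T' ⊆ L := hT'sub.trans (Finset.insert_subset (hBL hMB) hTL)
        have := hmax' j hj T' hT'L (hT'c.trans hTc)
        linarith
      · -- M ∈ T, improve Bstar
        have hMnB : M ∉ Bstar := fun h => (Finset.disjoint_left.mp hTB hMT) h
        have hminB : Bstar.min' hBne < M := by
          have h1 : Bstar.min' hBne ≤ M :=
            Finset.le_max' _ _ (Finset.mem_union_left _ (Bstar.min'_mem hBne))
          have h2 : Bstar.min' hBne ≠ M := fun h => hMnB (h ▸ Bstar.min'_mem hBne)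
          exact lt_of_le_of_ne h1 h2
        obtain ⟨B', hB'sub, hB'c, hB'sum⟩ := swap_lemma Bstar hBne M hMnB hminB
        have hB'L : B' ⊆ L := hB'sub.trans (Finset.insert_subset (hTL hMT) hBL)
        have := hmax' istar his B' hB'L (hB'c.trans hBc)
        linarith
    -- induction on the rest
    have hcarde : (s.erase istar).card = m := by
      rw [Finset.card_erase_of_mem his]; omega
    have hcardL : (L \ Bstar).card = ∑ i ∈ s.erase istar, n i := by
      rw [Finset.card_sdiff_of_subset hBL, hL, hBc]
      have := Finset.add_sum_erase s n his
      omega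
    obtain ⟨B', hB'L, hB'c, hB'd, hB's⟩ :=
      ih (s.erase istar) (L \ Bstar) hcarde (fun i hi => hn i (Finset.mem_of_mem_erase hi))
        hcardL
    refine ⟨fun j => if j = istar then Bstar else B' j, ?_, ?_, ?_, ?_⟩
    · intro i hi
      by_cases h : i = istar
      · simpa [h] using hBL
      · simpa [h] using (hB'L i (Finset.mem_erase.mpr ⟨h, hi⟩)).trans Finset.sdiff_subset
    · intro i hi
      by_cases h : i = istar
      · simp [h, hBc]
      · simpa [h] using hB'c i (Finset.mem_erase.mpr ⟨h, hi⟩)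
    · intro i hi j hj hij
      by_cases h : i = istar
      · subst h
        have hj' : ¬ (j = i) := fun hh => hij hh.symm
        simp only [if_pos rfl, if_neg hj']
        have : B' j ⊆ L \ Bstar := hB'L j (Finset.mem_erase.mpr ⟨hj', hj⟩)
        exact Disjoint.mono_right this Finset.disjoint_sdiff
      · by_cases h' : j = istar
        · subst h'
          simp only [if_neg h, if_pos rfl]
          have : B' i ⊆ L \ Bstar := hB'L i (Finset.mem_erase.mpr ⟨h, hi⟩)
          exact (Disjoint.mono_right this Finset.disjoint_sdiff).symm
        · simp only [if_neg h, if_neg h']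
          exact hB'd i (Finset.mem_erase.mpr ⟨h, hi⟩) j (Finset.mem_erase.mpr ⟨h', hj⟩) hij
    · intro i hi j hj hij
      by_cases h : i = istar
      · subst h
        have hj' : ¬ (j = i) := fun hh => hij hh.symm
        simp only [if_pos rfl, if_neg hj']
        have := key j hj hj' (B' j) (hB'L j (Finset.mem_erase.mpr ⟨hj', hj⟩))
          (hB'c j (Finset.mem_erase.mpr ⟨hj', hj⟩))
        exact fun hh => absurd hh.symm (ne_of_lt this)
      · by_cases h' : j = istar
        · subst h'
          simp only [if_neg h, if_pos rfl]
          have := key i hi h (B' i) (hB'L i (Finset.mem_erase.mpr ⟨h, hi⟩))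
            (hB'c i (Finset.mem_erase.mpr ⟨h, hi⟩))
          exact ne_of_lt this
        · simp only [if_neg h, if_neg h']
          exact hB's i (Finset.mem_erase.mpr ⟨h, hi⟩) j (Finset.mem_erase.mpr ⟨h', hj⟩) hij
section Aux

/-- Edge labelling built from a per-star vertex labelling `φ`. -/
noncomputable def auxf {V : Type*} [DecidableEq V] (k : ℕ) (c : Fin k → V)
    (A : Fin k → Finset V) (φ : Fin k → V → ℤ) : Sym2 V → ℤ :=
  fun e => ∑ i : Fin k,
    if h : c i ∈ e then (if Sym2.Mem.other h ∈ A i then φ i (Sym2.Mem.other h) else 0) else 0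

lemma auxf_eval {V : Type*} [DecidableEq V] (k : ℕ) (c : Fin k → V)
    (A : Fin k → Finset V) (φ : Fin k → V → ℤ) (hc : ∀ i, c i ∉ A i)
    (hdisj : ∀ i j : Fin k, i ≠ j → Disjoint (insert (c i) (A i)) (insert (c j) (A j)))
    (i : Fin k) (v : V) (hv : v ∈ A i) :
    auxf k c A φ s(c i, v) = φ i v := by
  have hvne : c i ≠ v := fun h => hc i (h ▸ hv)
  rw [auxf, Finset.sum_eq_single i]
  · have hm : c i ∈ s(c i, v) := Sym2.mem_mk_left _ _
    rw [dif_pos hm]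
    have hosp := Sym2.other_spec hm
    rcases Sym2.eq_iff.mp hosp with ⟨_, h2⟩ | ⟨h1, _⟩
    · rw [h2, if_pos hv]
    · exact absurd h1 hvne
  · intro j _ hji
    by_cases hm : c j ∈ s(c i, v)
    · exfalso
      have hcj : c j ∈ insert (c i) (A i) := by
        rcases Sym2.mem_iff.mp hm with h | h
        · rw [h]; exact Finset.mem_insert_self _ _
        · exact Finset.mem_insert_of_mem (h ▸ hv)
      exact Finset.disjoint_left.mp (hdisj j i hji) (Finset.mem_insert_self _ _) hcj
    · rw [dif_neg hm]
  · intro h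
    exact absurd (Finset.mem_univ i) h

end Aux


/-- Given vertex-disjoint stars `S₁, …, S_k` with centres `c₁, …, c_k` and a label set `L` of
size `|⋃ E(Sᵢ)|`, for any `g` there is a bijective labelling of the edges by `L` such that the
sums at the centres are pairwise distinct. -/
theorem statement16 {V : Type*} [DecidableEq V] (k : ℕ) (c : Fin k → V) (A : Fin k → Finset V)
    (hA : ∀ i, (A i).Nonempty) (hc : ∀ i, c i ∉ A i)
    (hdisj : ∀ i j : Fin k, i ≠ j → Disjoint (insert (c i) (A i)) (insert (c j) (A j)))
    (L : Finset ℤ) (hL : L.card = (starEdges k c A).card) (g : V → ℕ) :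
    ∃ f : Sym2 V → ℤ,
      Set.BijOn f ↑(starEdges k c A) ↑L ∧
      ∀ i j : Fin k, i ≠ j →
        (g (c i) : ℤ) + ∑ v ∈ A i, f s(c i, v) ≠
          (g (c j) : ℤ) + ∑ v ∈ A j, f s(c j, v) := by
  classical
  have uniq : ∀ (i j : Fin k) (u v : V), u ∈ A i → v ∈ A j → s(c i, u) = s(c j, v) →
      i = j ∧ u = v := by
    intro i j u v hu hv h
    rcases Sym2.eq_iff.mp h with ⟨h1, h2⟩ | ⟨h1, h2⟩
    · refine ⟨?_, h2⟩
      by_contra hij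
      have h3 : c i ∈ insert (c j) (A j) := by rw [h1]; exact Finset.mem_insert_self _ _
      exact Finset.disjoint_left.mp (hdisj i j hij) (Finset.mem_insert_self _ _) h3
    · exfalso
      by_cases hij : i = j
      · subst hij
        exact hc i (by rw [h1]; exact hv)
      · have h3 : c j ∈ insert (c i) (A i) := Finset.mem_insert_of_mem (by rw [← h2]; exact hu)
        exact Finset.disjoint_left.mp (hdisj j i (Ne.symm hij)) (Finset.mem_insert_self _ _) h3
  have decode : ∀ e ∈ starEdges k c A, ∃ i : Fin k, ∃ v, v ∈ A i ∧ e = s(c i, v) := by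
    intro e he
    simp only [starEdges, Finset.mem_biUnion, Finset.mem_image] at he
    obtain ⟨i, -, v, hv, he⟩ := he
    exact ⟨i, v, hv, he.symm⟩
  have hcardSE : (starEdges k c A).card = ∑ i : Fin k, (A i).card := by
    rw [starEdges, Finset.card_biUnion]
    · exact Finset.sum_congr rfl fun i _ =>
        Finset.card_image_of_injOn fun u hu v hv h => (uniq i i u v hu hv h).2
    · intro i _ j _ hij
      rw [Function.onFun, Finset.disjoint_left]
      rintro e hei hej
      simp only [Finset.mem_image] at hei hej
      obtain ⟨u, hu, rfl⟩ := hei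
      obtain ⟨v, hv, h⟩ := hej
      exact hij ((uniq i j u v hu hv h.symm).1)
  obtain ⟨B, hBL, hBc, hBd, hBs⟩ :=
    exists_blocks (fun i => (A i).card) (fun i => (g (c i) : ℤ))
      (Finset.univ : Finset (Fin k)).card Finset.univ L rfl
      (fun i _ => Finset.card_pos.mpr (hA i))
      (by rw [hL, hcardSE])
  have hcBA : ∀ i : Fin k, (A i).card = (B i).card := fun i =>
    (hBc i (Finset.mem_univ i)).symm
  let ψ : ∀ i : Fin k, {x // x ∈ A i} ≃ {x // x ∈ B i} := fun i => Finset.equivOfCardEq (hcBA i)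
  let φ : Fin k → V → ℤ := fun i v => if h : v ∈ A i then ((ψ i ⟨v, h⟩ : {x // x ∈ B i}) : ℤ) else 0
  have fval : ∀ (i : Fin k) (v : V) (hv : v ∈ A i),
      auxf k c A φ s(c i, v) = ((ψ i ⟨v, hv⟩ : {x // x ∈ B i}) : ℤ) := by
    intro i v hv
    rw [auxf_eval k c A φ hc hdisj i v hv]
    exact dif_pos hv
  have fmem : ∀ (i : Fin k) (v : V) (hv : v ∈ A i), auxf k c A φ s(c i, v) ∈ B i := by
    intro i v hv
    rw [fval i v hv]
    exact (ψ i ⟨v, hv⟩).2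
  have hinj : Set.InjOn (auxf k c A φ) ↑(starEdges k c A) := by
    intro e he e' he' heq
    obtain ⟨i, u, hu, rfl⟩ := decode e (Finset.mem_coe.mp he)
    obtain ⟨j, v, hv, rfl⟩ := decode e' (Finset.mem_coe.mp he')
    have hij : i = j := by
      by_contra hij
      have h1 := fmem i u hu
      have h2 := fmem j v hv
      rw [heq] at h1
      exact Finset.disjoint_left.mp
        (hBd i (Finset.mem_univ i) j (Finset.mem_univ j) hij) h1 h2
    subst hij
    rw [fval i u hu, fval i v hv] at heq
    have := (ψ i).injective (Subtype.ext heq)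
    have huv : u = v := congrArg Subtype.val this
    rw [huv]
  have himg : (starEdges k c A).image (auxf k c A φ) = L := by
    apply Finset.eq_of_subset_of_card_le
    · intro x hx
      obtain ⟨e, he, rfl⟩ := Finset.mem_image.mp hx
      obtain ⟨i, v, hv, rfl⟩ := decode e he
      exact hBL i (Finset.mem_univ i) (fmem i v hv)
    · rw [Finset.card_image_of_injOn hinj, hL]
  have hsum : ∀ i : Fin k, ∑ v ∈ A i, auxf k c A φ s(c i, v) = ∑ x ∈ B i, x := by
    intro i
    rw [← Finset.sum_attach (A i) (fun v => auxf k c A φ s(c i, v))]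
    have h1 : ∑ x ∈ (A i).attach, auxf k c A φ s(c i, (x : V)) =
        ∑ x ∈ (A i).attach, ((ψ i x : {y // y ∈ B i}) : ℤ) :=
      Finset.sum_congr rfl fun x _ => fval i x.1 x.2
    rw [h1]
    rw [← Finset.sum_attach (B i) (fun y => y), ← Finset.univ_eq_attach, ← Finset.univ_eq_attach]
    exact Equiv.sum_comp (ψ i) (fun y : {x // x ∈ B i} => (y : ℤ))
  refine ⟨auxf k c A φ, ⟨?_, hinj, ?_⟩, ?_⟩
  · intro e he
    obtain ⟨i, v, hv, rfl⟩ := decode e (Finset.mem_coe.mp he)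
    exact Finset.mem_coe.mpr (hBL i (Finset.mem_univ i) (fmem i v hv))
  · rw [← himg, Finset.coe_image]
    exact Set.Subset.refl _
  · intro i j hij
    rw [hsum i, hsum j]
    exact hBs i (Finset.mem_univ i) j (Finset.mem_univ j) hij
end
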